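/- arXiv:0810.1007 — 4 statements merged into one kernel-verified Lean document; each statement's English description precedes it below -/
import Mathlib

section
/- Let f, g ∈ ℂ[z₁,…,zₙ] be multi-affine polynomials (degree at most 1 in each variable). If f and g are both 𝔻-stable, then their Hadamard–Schur product (f • g)(z) = Σ_{α ∈ {0,1}ⁿ} f^{(α)}(0) g^{(α)}(0) z^α, where f^{(α)}(0) = (∂^α f)(0), is either 𝔻-stable or identically zero. -/
open MvPolynomial

/-- The complex absolute value, as a bundled absolute value (the norm). -/
noncomputable abbrev Complex.abs : AbsoluteValue ℂ ℝ := NormedField.toAbsoluteValue ℂ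

lemma Complex.norm_eq_abs (z : ℂ) : ‖z‖ = Complex.abs z := rfl

lemma Complex.sq_abs (z : ℂ) : Complex.abs z ^ 2 = Complex.normSq z := Complex.sq_norm z

lemma Complex.normSq_eq_abs (z : ℂ) : Complex.normSq z = Complex.abs z ^ 2 :=
  Complex.normSq_eq_norm_sq z

lemma Complex.abs_conj (z : ℂ) : Complex.abs ((starRingEnd ℂ) z) = Complex.abs z :=
  Complex.norm_conj z

lemma Complex.abs_ofReal (r : ℝ) : Complex.abs (r : ℂ) = |r| := Complex.norm_real r

section ABCD
open Complex
lemma hsABCD (A B C D : ℂ)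
    (h : ∀ u v : ℂ, Complex.abs u < 1 → Complex.abs v < 1 →
      A + B * u + C * v + D * (u * v) ≠ 0) :
    A ≠ 0 ∧ Complex.abs D ≤ Complex.abs A := by
  have hA : A ≠ 0 := by
    have := h 0 0 (by simp) (by simp)
    simpa using this
  refine ⟨hA, ?_⟩
  -- |B| ≤ |A|
  have hB : Complex.abs B ≤ Complex.abs A := by
    by_contra hlt
    push_neg at hlt
    have hBne : B ≠ 0 := by
      intro h0; rw [h0] at hlt; simp at hlt
      exact absurd hlt (Complex.abs.nonneg _).not_gt
    refine h (-A / B) 0 ?_ (by simp) ?_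
    · rw [map_div₀, map_neg_eq_map, div_lt_one (Complex.abs.pos hBne)]
      exact hlt
    · field_simp
      ring
  -- step 1
  have step1 : ∀ u : ℂ, Complex.abs u < 1 →
      Complex.abs (C + D * u) ≤ Complex.abs (A + B * u) := by
    intro u hu
    by_contra hlt
    push_neg at hlt
    have hCD : C + D * u ≠ 0 := by
      intro h0
      rw [h0] at hlt
      simp at hlt
      exact absurd hlt (Complex.abs.nonneg _).not_gt
    set v : ℂ := -(A + B * u) / (C + D * u) with hv
    have hvabs : Complex.abs v < 1 := by
      rw [hv, map_div₀, map_neg_eq_map]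
      rw [div_lt_one (Complex.abs.pos hCD)]
      exact hlt
    refine h u v hu hvabs ?_
    have hvm : v * (C + D * u) = -(A + B * u) := by rw [hv]; exact div_mul_cancel₀ _ hCD
    linear_combination hvm
  -- step 2 : closure
  have step2 : ∀ u : ℂ, Complex.abs u ≤ 1 →
      Complex.abs (C + D * u) ≤ Complex.abs (A + B * u) := by
    intro u hu
    have hclosed : IsClosed {u : ℂ | Complex.abs (C + D * u) ≤ Complex.abs (A + B * u)} := by
      apply isClosed_le
      · exact (by fun_prop : Continuous fun b : ℂ => ‖C + D * b‖)
      · exact (by fun_prop : Continuous fun b : ℂ => ‖A + B * b‖)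
    have hsub : Metric.closedBall (0:ℂ) 1 ⊆
        {u : ℂ | Complex.abs (C + D * u) ≤ Complex.abs (A + B * u)} := by
      rw [← closure_ball (0:ℂ) one_ne_zero]
      apply hclosed.closure_subset_iff.mpr
      intro x hx
      exact step1 x (mem_ball_zero_iff.mp hx)
    apply hsub
    rw [Metric.mem_closedBall, Complex.dist_eq]
    simpa [Complex.norm_eq_abs] using hu
  -- step 3 : boundary expansion
  set F := C * (starRingEnd ℂ) D - A * (starRingEnd ℂ) B with hF
  have expand : ∀ u : ℂ, Complex.abs u = 1 →
      2 * (F * (starRingEnd ℂ) u).re ≤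
        Complex.normSq A + Complex.normSq B - Complex.normSq C - Complex.normSq D := by
    intro u hu
    have h2 := step2 u hu.le
    have hsq : Complex.normSq (C + D * u) ≤ Complex.normSq (A + B * u) := by
      rw [Complex.normSq_eq_abs, Complex.normSq_eq_abs]
      exact pow_le_pow_left₀ (Complex.abs.nonneg _) h2 2
    have h1 : Complex.normSq u = 1 := by rw [Complex.normSq_eq_abs, hu]; norm_num
    rw [Complex.normSq_add, Complex.normSq_add, Complex.normSq_mul, Complex.normSq_mul,
      h1, map_mul, map_mul] at hsq
    have : (F * (starRingEnd ℂ) u).re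
        = (C * ((starRingEnd ℂ) D * (starRingEnd ℂ) u)).re
          - (A * ((starRingEnd ℂ) B * (starRingEnd ℂ) u)).re := by
      rw [hF]; rw [sub_mul]; rw [Complex.sub_re]; ring_nf
    rw [this]
    nlinarith [hsq]
  have key : 2 * Complex.abs F ≤
      Complex.normSq A + Complex.normSq B - Complex.normSq C - Complex.normSq D := by
    by_cases hF0 : F = 0
    · have e := expand 1 (by simp)
      rw [hF0] at e ⊢
      simpa using e
    · have habs : Complex.abs ((F : ℂ) / (Complex.abs F : ℂ)) = 1 := by
        rw [map_div₀, Complex.abs_ofReal, _root_.abs_of_nonneg (Complex.abs.nonneg F)]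
        exact div_self (Complex.abs.ne_zero hF0)
      have := expand (F / (Complex.abs F : ℂ)) habs
      have hre : (F * (starRingEnd ℂ) (F / (Complex.abs F : ℂ))).re = Complex.abs F := by
        rw [map_div₀, Complex.conj_ofReal, ← mul_div_assoc, Complex.mul_conj,
          ← Complex.ofReal_div, Complex.ofReal_re, Complex.normSq_eq_abs, pow_two,
          mul_div_assoc, div_self (Complex.abs.ne_zero hF0), mul_one]
      rw [hre] at this
      exact this
  -- final arithmetic
  have h1 : Complex.abs (C * (starRingEnd ℂ) D) - Complex.abs (A * (starRingEnd ℂ) B)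
      ≤ Complex.abs F := by
    simpa [hF, Complex.norm_eq_abs, Complex.abs_conj] using norm_sub_norm_le (C * (starRingEnd ℂ) D) (A * (starRingEnd ℂ) B)
  have h2 : Complex.abs (A * (starRingEnd ℂ) B) - Complex.abs (C * (starRingEnd ℂ) D)
      ≤ Complex.abs F := by
    have := norm_sub_norm_le (A * (starRingEnd ℂ) B) (C * (starRingEnd ℂ) D)
    rw [show A * (starRingEnd ℂ) B - C * (starRingEnd ℂ) D = -F by rw [hF]; ring] at this
    simpa [Complex.norm_eq_abs, Complex.abs_conj] using this
  rw [map_mul, map_mul, Complex.abs_conj, Complex.abs_conj] at h1 h2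
  have e1 : Complex.normSq A = Complex.abs A ^ 2 := (Complex.sq_abs A).symm
  have e2 : Complex.normSq B = Complex.abs B ^ 2 := (Complex.sq_abs B).symm
  have e3 : Complex.normSq C = Complex.abs C ^ 2 := (Complex.sq_abs C).symm
  have e4 : Complex.normSq D = Complex.abs D ^ 2 := (Complex.sq_abs D).symm
  rw [e1, e2, e3, e4] at key
  have g1 : (Complex.abs C + Complex.abs D)^2 ≤ (Complex.abs A + Complex.abs B)^2 := by
    nlinarith [key, h1]
  have g2 : (Complex.abs D - Complex.abs C)^2 ≤ (Complex.abs A - Complex.abs B)^2 := by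
    nlinarith [key, h2]
  have n1 : Complex.abs C + Complex.abs D ≤ Complex.abs A + Complex.abs B := by
    nlinarith [g1, Complex.abs.nonneg A, Complex.abs.nonneg B, Complex.abs.nonneg C,
      Complex.abs.nonneg D]
  have n2 : Complex.abs D - Complex.abs C ≤ Complex.abs A - Complex.abs B := by
    nlinarith [g2, hB, Complex.abs.nonneg C, Complex.abs.nonneg D]
  linarith

end ABCD

section Cube

variable {ι : Type*} [Fintype ι] [DecidableEq ι]

noncomputable def Eaff (a : Finset ι → ℂ) (z : ι → ℂ) : ℂ :=
  ∑ T ∈ (Finset.univ : Finset ι).powerset, a T * ∏ i ∈ T, z i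

noncomputable def Phi (s : Finset ι) (a b : Finset ι → ℂ) (z z' : ι → ℂ) : ℂ :=
  ∑ p ∈ (Finset.univ.powerset ×ˢ Finset.univ.powerset).filter
      (fun p : Finset ι × Finset ι => p.1 ∩ s = p.2 ∩ s),
    a p.1 * b p.2 * (∏ i ∈ p.1, z i) * ∏ i ∈ p.2 \ s, z' i

lemma Phi_empty (a b : Finset ι → ℂ) (z z' : ι → ℂ) :
    Phi ∅ a b z z' = Eaff a z * Eaff b z' := by
  rw [Phi, Eaff, Eaff, Finset.sum_mul_sum]
  rw [Finset.filter_true_of_mem (by simp)]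
  rw [Finset.sum_product]
  apply Finset.sum_congr rfl
  intro T _
  apply Finset.sum_congr rfl
  intro T' _
  simp only [Finset.sdiff_empty]
  ring

lemma Phi_univ (a b : Finset ι → ℂ) (z z' : ι → ℂ) :
    Phi Finset.univ a b z z' = Eaff (fun T => a T * b T) z := by
  rw [Phi, Eaff]
  refine Finset.sum_nbij' (fun p => p.1) (fun T => (T, T)) ?_ ?_ ?_ ?_ ?_
  · intro p hp
    simp only [Finset.mem_filter, Finset.mem_product] at hp
    exact hp.1.1
  · intro T hT
    simp
  · intro p hp
    simp only [Finset.mem_filter, Finset.mem_product, Finset.inter_univ] at hp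
    obtain ⟨-, h⟩ := hp
    exact Prod.ext (by rfl) (by simpa using h)
  · intro T _
    rfl
  · intro p hp
    simp only [Finset.mem_filter, Finset.mem_product, Finset.inter_univ] at hp
    obtain ⟨-, h⟩ := hp
    have : p.1 \ Finset.univ = ∅ := Finset.sdiff_eq_empty_iff_subset.mpr (Finset.subset_univ _)
    rw [← h, this]
    simp

lemma prod_update (z : ι → ℂ) (i : ι) (u : ℂ) (T : Finset ι) :
    ∏ j ∈ T, Function.update z i u j = (if i ∈ T then u else 1) * ∏ j ∈ T.erase i, z j := by
  by_cases h : i ∈ T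
  · rw [if_pos h, Finset.prod_update_of_mem h, Finset.erase_eq]
  · rw [if_neg h, Finset.erase_eq_of_notMem h, one_mul]
    exact Finset.prod_congr rfl fun j hj => Function.update_of_ne (ne_of_mem_of_not_mem hj h) _ _

lemma prod_split (z : ι → ℂ) (i : ι) (T : Finset ι) :
    ∏ j ∈ T, z j = (if i ∈ T then z i else 1) * ∏ j ∈ T.erase i, z j := by
  by_cases h : i ∈ T
  · rw [if_pos h, Finset.mul_prod_erase T z h]
  · rw [if_neg h, Finset.erase_eq_of_notMem h, one_mul]

lemma Phi_form (s : Finset ι) (a b : Finset ι → ℂ) (i : ι) (hi : i ∉ s)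
    (z z' : ι → ℂ) (u v : ℂ) :
    Phi s a b (Function.update z i u) (Function.update z' i v) =
      ∑ p ∈ (Finset.univ.powerset ×ˢ Finset.univ.powerset).filter
          (fun p : Finset ι × Finset ι => p.1 ∩ s = p.2 ∩ s),
        a p.1 * b p.2 * ((∏ j ∈ p.1.erase i, z j) * ∏ j ∈ (p.2 \ s).erase i, z' j)
          * ((if i ∈ p.1 then u else 1) * (if i ∈ p.2 then v else 1)) := by
  rw [Phi]
  refine Finset.sum_congr rfl fun p hp => ?_
  rw [prod_update z i u, prod_update z' i v]
  have : (if i ∈ p.2 \ s then v else 1) = (if i ∈ p.2 then v else 1) := by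
    simp [Finset.mem_sdiff, hi]
  rw [this]
  ring

lemma identity1 (s : Finset ι) (a b : Finset ι → ℂ) (i : ι) (hi : i ∉ s)
    (z z' : ι → ℂ) (u v : ℂ) :
    Phi s a b (Function.update z i u) (Function.update z' i v) =
      Phi s a b (Function.update z i 0) (Function.update z' i 0)
      + (Phi s a b (Function.update z i 1) (Function.update z' i 0)
          - Phi s a b (Function.update z i 0) (Function.update z' i 0)) * u
      + (Phi s a b (Function.update z i 0) (Function.update z' i 1)
          - Phi s a b (Function.update z i 0) (Function.update z' i 0)) * v
      + (Phi s a b (Function.update z i 1) (Function.update z' i 1)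
          - Phi s a b (Function.update z i 1) (Function.update z' i 0)
          - Phi s a b (Function.update z i 0) (Function.update z' i 1)
          + Phi s a b (Function.update z i 0) (Function.update z' i 0)) * (u * v) := by
  simp only [Phi_form s a b i hi z z']
  simp only [← Finset.sum_sub_distrib, ← Finset.sum_add_distrib, Finset.sum_mul]
  refine Finset.sum_congr rfl fun p hp => ?_
  by_cases h1 : i ∈ p.1 <;> by_cases h2 : i ∈ p.2 <;> simp only [h1, h2, if_pos, if_neg,
    if_true, if_false] <;> ring

lemma identity2 (s : Finset ι) (a b : Finset ι → ℂ) (i : ι) (hi : i ∉ s)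
    (z z' : ι → ℂ) :
    Phi (insert i s) a b z z' =
      Phi s a b (Function.update z i 0) (Function.update z' i 0)
      + (Phi s a b (Function.update z i 1) (Function.update z' i 1)
          - Phi s a b (Function.update z i 1) (Function.update z' i 0)
          - Phi s a b (Function.update z i 0) (Function.update z' i 1)
          + Phi s a b (Function.update z i 0) (Function.update z' i 0)) * (z i) := by
  have hfilter : (Finset.univ.powerset ×ˢ Finset.univ.powerset).filter
      (fun p : Finset ι × Finset ι => p.1 ∩ insert i s = p.2 ∩ insert i s)
      = ((Finset.univ.powerset ×ˢ Finset.univ.powerset).filter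
          (fun p : Finset ι × Finset ι => p.1 ∩ s = p.2 ∩ s)).filter
          (fun p : Finset ι × Finset ι => (i ∈ p.1 ↔ i ∈ p.2)) := by
    rw [Finset.filter_filter]
    apply Finset.filter_congr
    intro p _
    constructor
    · intro h
      constructor
      · ext j
        simp only [Finset.mem_inter]
        constructor
        · rintro ⟨hj1, hjs⟩
          have : j ∈ p.1 ∩ insert i s := Finset.mem_inter.mpr ⟨hj1, Finset.mem_insert_of_mem hjs⟩
          rw [h] at this
          exact ⟨(Finset.mem_inter.mp this).1, hjs⟩
        · rintro ⟨hj2, hjs⟩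
          have : j ∈ p.2 ∩ insert i s := Finset.mem_inter.mpr ⟨hj2, Finset.mem_insert_of_mem hjs⟩
          rw [← h] at this
          exact ⟨(Finset.mem_inter.mp this).1, hjs⟩
      · constructor
        · intro h1
          have : i ∈ p.1 ∩ insert i s := Finset.mem_inter.mpr ⟨h1, Finset.mem_insert_self i s⟩
          rw [h] at this
          exact (Finset.mem_inter.mp this).1
        · intro h2
          have : i ∈ p.2 ∩ insert i s := Finset.mem_inter.mpr ⟨h2, Finset.mem_insert_self i s⟩
          rw [← h] at this
          exact (Finset.mem_inter.mp this).1
    · rintro ⟨hs, hiff⟩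
      ext j
      simp only [Finset.mem_inter, Finset.mem_insert]
      by_cases hji : j = i
      · subst hji
        simp only [true_or, and_true]
        exact hiff
      · simp only [hji, false_or]
        constructor
        · rintro ⟨hj1, hjs⟩
          have : j ∈ p.1 ∩ s := Finset.mem_inter.mpr ⟨hj1, hjs⟩
          rw [hs] at this
          exact ⟨(Finset.mem_inter.mp this).1, hjs⟩
        · rintro ⟨hj2, hjs⟩
          have : j ∈ p.2 ∩ s := Finset.mem_inter.mpr ⟨hj2, hjs⟩
          rw [← hs] at this
          exact ⟨(Finset.mem_inter.mp this).1, hjs⟩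
  rw [Phi, hfilter, Finset.sum_filter]
  simp only [Phi_form s a b i hi z z']
  simp only [← Finset.sum_sub_distrib, ← Finset.sum_add_distrib, Finset.sum_mul]
  refine Finset.sum_congr rfl fun p hp => ?_
  rw [Finset.sdiff_insert, prod_split z i p.1]
  have hsplit2 : ∏ j ∈ p.2 \ s, z' j
      = (if i ∈ p.2 then z' i else 1) * ∏ j ∈ (p.2 \ s).erase i, z' j := by
    rw [prod_split z' i (p.2 \ s)]
    congr 1
    simp [Finset.mem_sdiff, hi]
  by_cases h1 : i ∈ p.1 <;> by_cases h2 : i ∈ p.2 <;>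
    simp only [h1, h2, if_true, if_false, iff_true, iff_false, true_iff, false_iff,
      not_true, not_false_iff, iff_self] <;> ring

theorem key_stability (a b : Finset ι → ℂ)
    (ha : ∀ z : ι → ℂ, (∀ i, Complex.abs (z i) < 1) → Eaff a z ≠ 0)
    (hb : ∀ z : ι → ℂ, (∀ i, Complex.abs (z i) < 1) → Eaff b z ≠ 0) :
    ∀ z : ι → ℂ, (∀ i, Complex.abs (z i) < 1) → Eaff (fun T => a T * b T) z ≠ 0 := by
  have Q : ∀ s : Finset ι, ∀ z z' : ι → ℂ, (∀ i, Complex.abs (z i) < 1) →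
      (∀ i, Complex.abs (z' i) < 1) → Phi s a b z z' ≠ 0 := by
    intro s
    induction s using Finset.induction_on with
    | empty =>
      intro z z' hz hz'
      rw [Phi_empty]
      exact mul_ne_zero (ha z hz) (hb z' hz')
    | @insert i s hi ih =>
      intro z z' hz hz'
      have hupd : ∀ (w : ι → ℂ) (u : ℂ), Complex.abs u < 1 → (∀ j, Complex.abs (w j) < 1) →
          ∀ j, Complex.abs (Function.update w i u j) < 1 := by
        intro w u hu hw j
        rcases eq_or_ne j i with rfl | hj
        · rwa [Function.update_self]
        · rw [Function.update_of_ne hj]; exact hw j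
      have h4 : ∀ u v : ℂ, Complex.abs u < 1 → Complex.abs v < 1 →
          Phi s a b (Function.update z i 0) (Function.update z' i 0)
          + (Phi s a b (Function.update z i 1) (Function.update z' i 0)
              - Phi s a b (Function.update z i 0) (Function.update z' i 0)) * u
          + (Phi s a b (Function.update z i 0) (Function.update z' i 1)
              - Phi s a b (Function.update z i 0) (Function.update z' i 0)) * v
          + (Phi s a b (Function.update z i 1) (Function.update z' i 1)
              - Phi s a b (Function.update z i 1) (Function.update z' i 0)
              - Phi s a b (Function.update z i 0) (Function.update z' i 1)
              + Phi s a b (Function.update z i 0) (Function.update z' i 0)) * (u * v) ≠ 0 := by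
        intro u v hu hv
        rw [← identity1 s a b i hi z z' u v]
        exact ih (Function.update z i u) (Function.update z' i v)
          (hupd z u hu hz) (hupd z' v hv hz')
      obtain ⟨hA, hD⟩ := hsABCD _ _ _ _ h4
      rw [identity2 s a b i hi z z']
      intro h0
      have heq : Complex.abs (Phi s a b (Function.update z i 0) (Function.update z' i 0))
          = Complex.abs ((Phi s a b (Function.update z i 1) (Function.update z' i 1)
              - Phi s a b (Function.update z i 1) (Function.update z' i 0)
              - Phi s a b (Function.update z i 0) (Function.update z' i 1)
              + Phi s a b (Function.update z i 0) (Function.update z' i 0)) * (z i)) := by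
        rw [show (Phi s a b (Function.update z i 1) (Function.update z' i 1)
              - Phi s a b (Function.update z i 1) (Function.update z' i 0)
              - Phi s a b (Function.update z i 0) (Function.update z' i 1)
              + Phi s a b (Function.update z i 0) (Function.update z' i 0)) * (z i)
            = - Phi s a b (Function.update z i 0) (Function.update z' i 0) by linear_combination h0]
        rw [map_neg_eq_map]
      rw [map_mul] at heq
      have hlt : Complex.abs ((Phi s a b (Function.update z i 1) (Function.update z' i 1)
              - Phi s a b (Function.update z i 1) (Function.update z' i 0)
              - Phi s a b (Function.update z i 0) (Function.update z' i 1)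
              + Phi s a b (Function.update z i 0) (Function.update z' i 0)))
              * Complex.abs (z i)
          < Complex.abs (Phi s a b (Function.update z i 0) (Function.update z' i 0)) := by
        calc _ ≤ Complex.abs (Phi s a b (Function.update z i 0) (Function.update z' i 0))
                  * Complex.abs (z i) := by
              apply mul_le_mul_of_nonneg_right hD (Complex.abs.nonneg _)
          _ < _ := by
              have hpos : 0 < Complex.abs (Phi s a b (Function.update z i 0) (Function.update z' i 0)) :=
                Complex.abs.pos hA
              nlinarith [hz i, Complex.abs.nonneg (z i)]
      rw [heq] at hlt
      exact lt_irrefl _ hlt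
  intro z hz
  rw [← Phi_univ a b z z]
  exact Q Finset.univ z z hz hz

end Cube

section Poly
variable {n : ℕ}


noncomputable def pdE (i : Fin n) : Module.End ℂ (MvPolynomial (Fin n) ℂ) :=
  ((pderiv i : Derivation ℂ (MvPolynomial (Fin n) ℂ) (MvPolynomial (Fin n) ℂ))).toLinearMap

lemma descFactorial_succ' (m k : ℕ) :
    m.descFactorial (k + 1) = m * (m - 1).descFactorial k := by
  cases m with
  | zero => rw [Nat.zero_descFactorial_succ, Nat.zero_mul]
  | succ m => rw [Nat.succ_descFactorial_succ, Nat.succ_sub_one]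

lemma pdE_pow_monomial (i : Fin n) (k : ℕ) :
    ∀ (γ : Fin n →₀ ℕ) (c : ℂ), ((pdE i) ^ k) (monomial γ c) =
      monomial (γ - Finsupp.single i k) (((γ i).descFactorial k : ℕ) * c) := by
  induction k with
  | zero =>
    intro γ c
    simp
  | succ k ihk =>
    intro γ c
    rw [pow_succ, Module.End.mul_apply,
      show (pdE i) ((monomial γ) c) = pderiv i (monomial γ c) from rfl,
      pderiv_monomial, ihk]
    have h1 : γ - Finsupp.single i 1 - Finsupp.single i k = γ - Finsupp.single i (k + 1) := by
      rw [tsub_tsub, ← Finsupp.single_add, add_comm]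
    have h2 : ((γ - Finsupp.single i 1) : Fin n →₀ ℕ) i = γ i - 1 := by
      rw [Finsupp.tsub_apply, Finsupp.single_eq_same]
    rw [h1, h2]
    congr 1
    rw [descFactorial_succ' (γ i) k]
    push_cast
    ring

lemma listProd_monomial (α β : Fin n →₀ ℕ) (c : ℂ) :
    ∀ (l : List (Fin n)), l.Nodup →
      ((l.map fun i => pdE i ^ α i).prod) (monomial β c) =
        monomial (β - l.toFinset.sum fun i => Finsupp.single i (α i))
          ((∏ i ∈ l.toFinset, (β i).descFactorial (α i) : ℕ) * c) := by
  intro l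
  induction l with
  | nil =>
    intro _
    simp
  | cons i l ihl =>
    intro hnd
    rw [List.nodup_cons] at hnd
    obtain ⟨hi, hnd⟩ := hnd
    have hit : i ∉ l.toFinset := by simpa using hi
    rw [List.map_cons, List.prod_cons, Module.End.mul_apply, ihl hnd, pdE_pow_monomial]
    have hS : ((l.toFinset.sum fun j => Finsupp.single j (α j)) : Fin n →₀ ℕ) i = 0 := by
      rw [Finset.sum_apply']
      apply Finset.sum_eq_zero
      intro j hj
      exact Finsupp.single_eq_of_ne' (fun h => hit (h ▸ hj))
    have hβ : ((β - l.toFinset.sum fun j => Finsupp.single j (α j)) : Fin n →₀ ℕ) i = β i := by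
      rw [Finsupp.tsub_apply, hS, Nat.sub_zero]
    rw [hβ]
    have hexp : (β - l.toFinset.sum fun j => Finsupp.single j (α j)) - Finsupp.single i (α i)
        = β - (i :: l).toFinset.sum fun j => Finsupp.single j (α j) := by
      rw [tsub_tsub, List.toFinset_cons, Finset.sum_insert hit, add_comm]
    rw [hexp]
    congr 1
    rw [List.toFinset_cons, Finset.prod_insert hit]
    push_cast
    ring

end Poly

/-- The iterated partial derivative `∂^α = ∂^{|α|}/∂z₁^{α₁}⋯∂zₙ^{αₙ}`,
as a linear endomorphism of the polynomial ring. -/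
noncomputable def pdPow {n : ℕ} (α : Fin n →₀ ℕ) :
    Module.End ℂ (MvPolynomial (Fin n) ℂ) :=
  (List.ofFn fun i : Fin n => ((pderiv i : Derivation ℂ (MvPolynomial (Fin n) ℂ)
      (MvPolynomial (Fin n) ℂ)).toLinearMap) ^ (α i)).prod

/-- The multi-index `(1,…,1)`. -/
noncomputable def onesExp (n : ℕ) : Fin n →₀ ℕ :=
  Finsupp.equivFunOnFinite.symm fun _ => 1

section Poly2
variable {n : ℕ}

lemma onesExp_apply (i : Fin n) : onesExp n i = 1 := rfl

lemma sum_single_eq (α : Fin n →₀ ℕ) :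
    (Finset.univ.sum fun i => Finsupp.single i (α i)) = α := by
  ext j
  rw [Finset.sum_apply']
  rw [Finset.sum_eq_single j (fun b _ hb => Finsupp.single_eq_of_ne' hb) (by simp)]
  exact Finsupp.single_eq_same

lemma pdPow_monomial (α β : Fin n →₀ ℕ) (c : ℂ) :
    pdPow α (monomial β c) =
      monomial (β - α) ((∏ i : Fin n, (β i).descFactorial (α i) : ℕ) * c) := by
  have : pdPow α = ((List.finRange n).map fun i => pdE i ^ α i).prod := by
    rw [pdPow, List.ofFn_eq_map]
    rfl
  rw [this, listProd_monomial α β c (List.finRange n) (List.nodup_finRange n),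
    List.toFinset_finRange, sum_single_eq]

lemma eval_zero_monomial (γ : Fin n →₀ ℕ) (c : ℂ) :
    eval (0 : Fin n → ℂ) (monomial γ c) = if γ = 0 then c else 0 := by
  rw [eval_monomial]
  simp only [Pi.zero_apply]
  by_cases h : γ = 0
  · subst h
    simp
  · rw [if_neg h]
    obtain ⟨i, hi⟩ : ∃ i, γ i ≠ 0 := by
      by_contra hc
      push_neg at hc
      exact h (Finsupp.ext hc)
    have : γ.prod (fun i e => (0:ℂ) ^ e) = 0 := by
      apply Finset.prod_eq_zero (Finsupp.mem_support_iff.mpr hi)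
      simp only []
      exact zero_pow hi
    rw [this, mul_zero]

lemma eval0_pdPow (α : Fin n →₀ ℕ) (hα : α ≤ onesExp n) (f : MvPolynomial (Fin n) ℂ) :
    eval 0 (pdPow α f) = coeff α f := by
  conv_lhs => rw [f.as_sum]
  rw [map_sum, map_sum]
  have hterm : ∀ β ∈ f.support,
      eval 0 (pdPow α (monomial β (coeff β f))) = if β = α then coeff β f else 0 := by
    intro β _
    rw [pdPow_monomial, eval_zero_monomial]
    by_cases hβ : β = α
    · subst hβ
      rw [if_pos (tsub_self β), if_pos rfl]
      have : (∏ i : Fin n, (β i).descFactorial (β i) : ℕ) = 1 := by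
        apply Finset.prod_eq_one
        intro i _
        rw [Nat.descFactorial_self]
        have h1 : β i ≤ 1 := hα i
        interval_cases h : β i <;> simp
      rw [this, Nat.cast_one, one_mul]
    · rw [if_neg hβ]
      by_cases hz : β - α = 0
      · rw [if_pos hz]
        obtain ⟨i, hi⟩ : ∃ i, β i ≠ α i := by
          by_contra hc
          push_neg at hc
          exact hβ (Finsupp.ext hc)
        have hle : β i < α i := by
          have : β i - α i = 0 := by
            have := congrArg (fun g : Fin n →₀ ℕ => g i) hz
            simpa [Finsupp.tsub_apply] using this
          omega
        have : (∏ j : Fin n, (β j).descFactorial (α j) : ℕ) = 0 := by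
          apply Finset.prod_eq_zero (Finset.mem_univ i)
          exact Nat.descFactorial_eq_zero_iff_lt.mpr hle
        rw [this, Nat.cast_zero, zero_mul]
      · rw [if_neg hz]
  rw [Finset.sum_congr rfl hterm, Finset.sum_ite_eq' f.support α (fun β => coeff β f)]
  by_cases h : α ∈ f.support
  · rw [if_pos h]
  · rw [if_neg h]
    exact (MvPolynomial.notMem_support_iff.mp h).symm

end Poly2

/-- The Hadamard–Schur product of two multi-affine polynomials:
`(f • g)(z) = ∑_{α ∈ {0,1}ⁿ} (∂^α f)(0) (∂^α g)(0) z^α`. -/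
noncomputable def hadamardSchur {n : ℕ} (f g : MvPolynomial (Fin n) ℂ) :
    MvPolynomial (Fin n) ℂ :=
  ∑ α ∈ Finset.Iic (onesExp n),
    monomial α (eval 0 (pdPow α f) * eval 0 (pdPow α g))

section Poly3
variable {n : ℕ}

lemma support_subset_Iic (f : MvPolynomial (Fin n) ℂ) (hfa : ∀ i, f.degreeOf i ≤ 1) :
    f.support ⊆ Finset.Iic (onesExp n) := by
  intro α hα
  rw [Finset.mem_Iic]
  intro i
  rw [onesExp_apply]
  calc α i ≤ f.degreeOf i := by
        rw [degreeOf_eq_sup]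
        exact Finset.le_sup (f := fun m => m i) hα
    _ ≤ 1 := hfa i

lemma eval_eq_sum_Iic (f : MvPolynomial (Fin n) ℂ) (hfa : ∀ i, f.degreeOf i ≤ 1)
    (z : Fin n → ℂ) :
    eval z f = ∑ α ∈ Finset.Iic (onesExp n), coeff α f * ∏ i, z i ^ α i := by
  rw [eval_eq']
  apply Finset.sum_subset (support_subset_Iic f hfa)
  intro α _ hα
  rw [MvPolynomial.notMem_support_iff.mp hα, zero_mul]

lemma eval_hadamardSchur (f g : MvPolynomial (Fin n) ℂ) (z : Fin n → ℂ) :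
    eval z (hadamardSchur f g)
      = ∑ α ∈ Finset.Iic (onesExp n), (coeff α f * coeff α g) * ∏ i, z i ^ α i := by
  rw [hadamardSchur, map_sum]
  apply Finset.sum_congr rfl
  intro α hα
  rw [eval_monomial, eval0_pdPow α (Finset.mem_Iic.mp hα), eval0_pdPow α (Finset.mem_Iic.mp hα),
    Finsupp.prod_fintype _ _ (fun i => pow_zero (z i))]

noncomputable def expT (T : Finset (Fin n)) : Fin n →₀ ℕ :=
  Finsupp.equivFunOnFinite.symm fun i => if i ∈ T then 1 else 0

lemma expT_apply (T : Finset (Fin n)) (i : Fin n) : expT T i = if i ∈ T then 1 else 0 := rfl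

lemma expT_mem (T : Finset (Fin n)) : expT T ∈ Finset.Iic (onesExp n) := by
  rw [Finset.mem_Iic]
  intro i
  rw [expT_apply, onesExp_apply]
  split <;> norm_num

lemma expT_support (T : Finset (Fin n)) : (expT T).support = T := by
  ext i
  rw [Finsupp.mem_support_iff, expT_apply]
  split <;> simp_all

lemma expT_support_eq (α : Fin n →₀ ℕ) (hα : α ≤ onesExp n) : expT α.support = α := by
  ext i
  rw [expT_apply]
  by_cases h : i ∈ α.support
  · rw [if_pos h]
    have h1 : α i ≤ 1 := by have := hα i; rwa [onesExp_apply] at this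
    have h2 : α i ≠ 0 := Finsupp.mem_support_iff.mp h
    omega
  · rw [if_neg h]
    exact (Finsupp.notMem_support_iff.mp h).symm

lemma prod_pow_eq_prod_support (α : Fin n →₀ ℕ) (hα : α ≤ onesExp n) (z : Fin n → ℂ) :
    ∏ i, z i ^ α i = ∏ i ∈ α.support, z i := by
  rw [show ∏ i ∈ α.support, z i = ∏ i ∈ α.support, z i ^ α i from Finset.prod_congr rfl
    (fun i hi => by
      have h1 : α i ≤ 1 := by have := hα i; rwa [onesExp_apply] at this
      have h2 : α i ≠ 0 := Finsupp.mem_support_iff.mp hi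
      have : α i = 1 := by omega
      rw [this, pow_one])]
  exact (Finset.prod_subset (Finset.subset_univ _)
    (fun i _ hi => by rw [Finsupp.notMem_support_iff.mp hi, pow_zero])).symm

lemma sum_Iic_eq_sum_powerset (F : (Fin n →₀ ℕ) → ℂ) (z : Fin n → ℂ) :
    ∑ α ∈ Finset.Iic (onesExp n), F α * ∏ i, z i ^ α i
      = ∑ T ∈ (Finset.univ : Finset (Fin n)).powerset, F (expT T) * ∏ i ∈ T, z i := by
  refine Finset.sum_nbij' (fun α => α.support) (fun T => expT T) ?_ ?_ ?_ ?_ ?_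
  · intro α _
    simp
  · intro T _
    exact expT_mem T
  · intro α hα
    exact expT_support_eq α (Finset.mem_Iic.mp hα)
  · intro T _
    exact expT_support T
  · intro α hα
    rw [prod_pow_eq_prod_support α (Finset.mem_Iic.mp hα) z,
      expT_support_eq α (Finset.mem_Iic.mp hα)]
end Poly3

/-- **Hinkkanen's composition theorem.** If `f` and `g` are multi-affine and `𝔻`-stable,
then their Hadamard–Schur product is `𝔻`-stable or identically zero. -/
theorem hadamard_schur_disc_stable (n : ℕ) (f g : MvPolynomial (Fin n) ℂ)
    (hfa : ∀ i, f.degreeOf i ≤ 1) (hga : ∀ i, g.degreeOf i ≤ 1)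
    (hf : ∀ z : Fin n → ℂ, (∀ i, ‖z i‖ < 1) → eval z f ≠ 0)
    (hg : ∀ z : Fin n → ℂ, (∀ i, ‖z i‖ < 1) → eval z g ≠ 0) :
    hadamardSchur f g = 0 ∨
      ∀ z : Fin n → ℂ, (∀ i, ‖z i‖ < 1) → eval z (hadamardSchur f g) ≠ 0 := by
  classical
  right
  intro z hz
  have hEf : ∀ w : Fin n → ℂ, Eaff (fun T => coeff (expT T) f) w = eval w f := fun w => by
    rw [Eaff, ← sum_Iic_eq_sum_powerset (fun α => coeff α f) w, ← eval_eq_sum_Iic f hfa w]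
  have hEg : ∀ w : Fin n → ℂ, Eaff (fun T => coeff (expT T) g) w = eval w g := fun w => by
    rw [Eaff, ← sum_Iic_eq_sum_powerset (fun α => coeff α g) w, ← eval_eq_sum_Iic g hga w]
  have hkey := key_stability (fun T => coeff (expT T) f) (fun T => coeff (expT T) g)
    (fun w hw => by rw [hEf w]; exact hf w hw)
    (fun w hw => by rw [hEg w]; exact hg w hw) z hz
  rw [eval_hadamardSchur f g z, sum_Iic_eq_sum_powerset (fun α => coeff α f * coeff α g) z]
  rw [Eaff] at hkey
  exact hkey
end

section
/- Let n ≥ 1 and let a_{ij} ∈ ℂ for 1 ≤ i,j ≤ n satisfy |a_{ij}| ≤ 1 and a_{ji} = conj(a_{ij}) for all i,j. Then the polynomial Σ_{S ⊆ {1,…,n}} (Π_{i∈S} z_i) · (Π_{i∈S} Π_{j∉S} a_{ij}) is 𝔻-stable, i.e., it is nonzero whenever |z_i| < 1 for all 1 ≤ i ≤ n. -/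
lemma RL (a b a' b' k r : ℝ) (ha' : 0 ≤ a') (hb' : 0 ≤ b') (hb : 0 ≤ b) (hab : b ≤ a)
    (hk : 0 ≤ k) (hk1 : a*b - a'*b' ≤ k) (hk2 : a'*b' - a*b ≤ k)
    (hr0 : 0 ≤ r) (hr1 : r ≤ 1)
    (hF : 0 ≤ a^2 - a'^2 + (b^2 - b'^2)*r^2 - 2*k*r)
    (hF1 : 0 ≤ a^2 + b^2 - a'^2 - b'^2 - 2*k) :
    0 ≤ a^2 - b'^2 + (b^2 - a'^2)*r^2 - 2*k*r := by
  have hr2 : r^2 ≤ 1 := by nlinarith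
  rcases le_or_gt b' a' with h1 | h1
  · have e1 : b'^2 ≤ a'^2 := by nlinarith
    nlinarith [mul_nonneg (sub_nonneg.2 e1) (sub_nonneg.2 hr2)]
  · have ha0 : 0 ≤ a := le_trans hb hab
    have h2 : b' - a' ≤ a - b := by nlinarith [sq_nonneg (a - b), sq_nonneg (b' - a')]
    have h3 : a' + b' ≤ a + b := by nlinarith [sq_nonneg (a + b), sq_nonneg (a' + b')]
    have hq : b' ≤ a := by linarith
    have q0 : b'^2 ≤ a^2 := by nlinarith
    rcases le_or_gt b a' with hp | hp
    · have p0 : b^2 ≤ a'^2 := by nlinarith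
      nlinarith [mul_nonneg (sub_nonneg.2 q0) (sub_nonneg.2 hr1),
        mul_nonneg hr0 hF1,
        mul_nonneg (mul_nonneg hr0 (sub_nonneg.2 hr1)) (sub_nonneg.2 p0)]
    · have p0 : a'^2 ≤ b^2 := by nlinarith
      have hkp : b^2 - a'^2 ≤ k := by
        have t1 : b*(b'-a') ≤ b*(a-b) := mul_le_mul_of_nonneg_left h2 hb
        have t2 : 0 ≤ (b-a')*(b'-a') := mul_nonneg (sub_nonneg.2 hp.le) (sub_nonneg.2 h1.le)
        nlinarith [t1, t2]
      have h4 : 0 ≤ 2*k - (b^2 - a'^2)*(1+r) := by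
        linarith [hkp, mul_nonneg (sub_nonneg.2 p0) (sub_nonneg.2 hr1),
          mul_le_mul_of_nonneg_left hr1 (sub_nonneg.2 p0)]
      linarith [hF1, mul_nonneg (sub_nonneg.2 hr1) h4]

lemma absB_le_absA (A B : ℂ) (h : ∀ u : ℂ, ‖u‖ < 1 → A + u*B ≠ 0) :
    ‖B‖ ≤ ‖A‖ := by
  by_contra hlt
  push_neg at hlt
  have hB : B ≠ 0 := by
    intro hB0; rw [hB0] at hlt; simp at hlt
    exact absurd hlt (not_lt.2 (norm_nonneg A))
  have habs : ‖(-A/B)‖ < 1 := by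
    rw [norm_div, norm_neg]
    rw [div_lt_one (norm_pos_iff.2 hB)]
    exact hlt
  exact h _ habs (by field_simp; ring)

lemma NL (A B A' B' : ℂ) (hBA : ‖B‖ ≤ ‖A‖)
    (h : ∀ u : ℂ, ‖u‖ < 1 →
      ‖(A' + (starRingEnd ℂ u)*B')‖ ≤ ‖(A + u*B)‖) :
    ∀ v : ℂ, ‖v‖ < 1 → ‖(B' + v*A')‖ ≤ ‖(A + v*B)‖ := by
  intro v hv
  set c : ℂ := (starRingEnd ℂ A) * B - A' * (starRingEnd ℂ B') with hc
  have expand : ∀ u : ℂ, Complex.normSq (A + u*B) - Complex.normSq (A' + (starRingEnd ℂ u)*B')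
      = Complex.normSq A - Complex.normSq A'
        + (Complex.normSq B - Complex.normSq B') * Complex.normSq u + 2*(u*c).re := by
    intro u
    rw [hc]
    simp only [Complex.normSq_apply, Complex.add_re, Complex.add_im,
      Complex.mul_re, Complex.mul_im, Complex.sub_re, Complex.sub_im,
      Complex.conj_re, Complex.conj_im]
    ring
  have expand2 : Complex.normSq (A + v*B) - Complex.normSq (B' + v*A')
      = Complex.normSq A - Complex.normSq B'
        + (Complex.normSq B - Complex.normSq A') * Complex.normSq v + 2*(v*c).re := by
    rw [hc]
    simp only [Complex.normSq_apply, Complex.add_re, Complex.add_im,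
      Complex.mul_re, Complex.mul_im, Complex.sub_re, Complex.sub_im,
      Complex.conj_re, Complex.conj_im]
    ring
  have hFr : ∀ r : ℝ, 0 ≤ r → r < 1 →
      0 ≤ (‖A‖)^2 - (‖A'‖)^2
        + ((‖B‖)^2 - (‖B'‖)^2)*r^2 - 2*(‖c‖)*r := by
    intro r hr0 hr1
    obtain ⟨u, habsu, huc⟩ : ∃ u : ℂ, ‖u‖ = r ∧ (u*c).re = -(r*(‖c‖)) := by
      by_cases hc0 : c = 0
      · exact ⟨(r:ℂ), by rw [Complex.norm_real, Real.norm_of_nonneg hr0], by simp [hc0]⟩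
      · refine ⟨(↑(-(r/‖c‖)) : ℂ) * (starRingEnd ℂ c), ?_, ?_⟩
        · rw [norm_mul, Complex.norm_real, Complex.norm_conj, norm_neg,
            Real.norm_of_nonneg (div_nonneg hr0 (norm_nonneg c))]
          have hcne : ‖c‖ ≠ 0 := norm_ne_zero_iff.2 hc0
          field_simp
        · have h5 : (↑(-(r/‖c‖)) : ℂ) * (starRingEnd ℂ c) * c
              = (↑(-(r/‖c‖) * Complex.normSq c) : ℂ) := by
            rw [mul_assoc, ← Complex.normSq_eq_conj_mul_self]
            push_cast; ring
          rw [h5, Complex.ofReal_re, Complex.normSq_eq_norm_sq]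
          have hcne : ‖c‖ ≠ 0 := norm_ne_zero_iff.2 hc0
          field_simp
    have hult : ‖u‖ < 1 := by rw [habsu]; exact hr1
    have h3 : 0 ≤ Complex.normSq (A + u*B) - Complex.normSq (A' + (starRingEnd ℂ u)*B') := by
      rw [sub_nonneg, ← Complex.sq_norm, ← Complex.sq_norm]
      exact pow_le_pow_left₀ (norm_nonneg _) (h _ hult) 2
    rw [expand, ← Complex.sq_norm A, ← Complex.sq_norm A', ← Complex.sq_norm B,
      ← Complex.sq_norm B', ← Complex.sq_norm u, habsu, huc] at h3
    linarith
  have hF1 : 0 ≤ (‖A‖)^2 - (‖A'‖)^2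
      + ((‖B‖)^2 - (‖B'‖)^2) - 2*(‖c‖) := by
    have cont : Continuous (fun r : ℝ => (‖A‖)^2 - (‖A'‖)^2
        + ((‖B‖)^2 - (‖B'‖)^2)*r^2 - 2*(‖c‖)*r) := by
      continuity
    have tend := (cont.tendsto 1).mono_left
      (nhdsWithin_le_nhds (s := Set.Iio (1:ℝ)))
    have hev : ∀ᶠ r in nhdsWithin 1 (Set.Iio (1:ℝ)),
        0 ≤ (‖A‖)^2 - (‖A'‖)^2
          + ((‖B‖)^2 - (‖B'‖)^2)*r^2 - 2*(‖c‖)*r := by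
      filter_upwards [Ioo_mem_nhdsLT_of_mem (Set.mem_Ioc.mpr ⟨zero_lt_one, le_refl 1⟩)]
        with r hr
      exact hFr r hr.1.le hr.2
    have := ge_of_tendsto tend hev
    simpa using this
  have hk1 : (‖A‖)*(‖B‖) - (‖A'‖)*(‖B'‖)
      ≤ ‖c‖ := by
    have h1 := abs_norm_sub_norm_le ((starRingEnd ℂ A) * B) (A' * (starRingEnd ℂ B'))
    rw [← hc] at h1
    simpa [norm_mul, Complex.norm_conj] using le_trans (le_abs_self _) h1
  have hk2 : (‖A'‖)*(‖B'‖) - (‖A‖)*(‖B‖)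
      ≤ ‖c‖ := by
    have h1 := abs_norm_sub_norm_le ((starRingEnd ℂ A) * B) (A' * (starRingEnd ℂ B'))
    rw [← hc] at h1
    have h2 : ‖(A' * (starRingEnd ℂ B'))‖ - ‖((starRingEnd ℂ A) * B)‖
        ≤ |‖((starRingEnd ℂ A) * B)‖ - ‖(A' * (starRingEnd ℂ B'))‖| := by
      rw [abs_sub_comm]; exact le_abs_self _
    simpa [norm_mul, Complex.norm_conj] using le_trans h2 h1
  have hG := RL (‖A‖) (‖B‖) (‖A'‖) (‖B'‖)
    (‖c‖) (‖v‖) (norm_nonneg _) (norm_nonneg _)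
    (norm_nonneg _) hBA (norm_nonneg _) hk1 hk2
    (norm_nonneg _) hv.le (hFr _ (norm_nonneg _) hv) (by linarith)
  have hre : -(‖v‖ * ‖c‖) ≤ (v*c).re := by
    have h1 : |(v*c).re| ≤ ‖(v*c)‖ := Complex.abs_re_le_norm _
    rw [norm_mul] at h1
    linarith [(abs_le.1 h1).1]
  have hfinal : Complex.normSq (B' + v*A') ≤ Complex.normSq (A + v*B) := by
    rw [← sub_nonneg, expand2, ← Complex.sq_norm A, ← Complex.sq_norm A', ← Complex.sq_norm B,
      ← Complex.sq_norm B', ← Complex.sq_norm v]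
    nlinarith [hG, hre]
  have := Real.sqrt_le_sqrt hfinal
  rwa [← Complex.norm_def, ← Complex.norm_def] at this

set_option linter.unusedSectionVars false

section LY
variable {α : Type*} [DecidableEq α]

/-- Evaluation of a multiaffine polynomial with coefficients `d` in variables from `s`. -/
noncomputable def ev (d : Finset α → ℂ) (s : Finset α) (z : α → ℂ) : ℂ :=
  ∑ T ∈ s.powerset, d T * ∏ i ∈ T, z i

/-- Reflected (conjugate-flipped) coefficients relative to `s`. -/
noncomputable def rf (d : Finset α → ℂ) (s : Finset α) : Finset α → ℂ :=
  fun T => starRingEnd ℂ (d (s \ T))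

lemma ev_empty (d : Finset α → ℂ) (z : α → ℂ) : ev d ∅ z = d ∅ := by
  simp [ev]

lemma ev_insert (d : Finset α → ℂ) {j : α} {s : Finset α} (hj : j ∉ s) (z : α → ℂ) :
    ev d (insert j s) z = ev d s z + z j * ev (fun T => d (insert j T)) s z := by
  unfold ev
  rw [Finset.sum_powerset_insert hj, Finset.mul_sum]
  congr 1
  refine Finset.sum_congr rfl fun T hT => ?_
  have hjT : j ∉ T := fun hmem => hj (Finset.mem_powerset.1 hT hmem)
  rw [Finset.prod_insert hjT]
  ring

lemma ev_congr_coeff {d d' : Finset α → ℂ} {s : Finset α}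
    (h : ∀ T ∈ s.powerset, d T = d' T) (z : α → ℂ) : ev d s z = ev d' s z :=
  Finset.sum_congr rfl fun T hT => by rw [h T hT]

lemma ev_congr_var {d : Finset α → ℂ} {s : Finset α} {z z' : α → ℂ}
    (h : ∀ i ∈ s, z i = z' i) : ev d s z = ev d s z' := by
  refine Finset.sum_congr rfl fun T hT => ?_
  rw [Finset.prod_congr rfl fun i hi => h i (Finset.mem_powerset.1 hT hi)]

lemma ev_add_smul (d e : Finset α → ℂ) (u : ℂ) (s : Finset α) (z : α → ℂ) :
    ev (fun T => d T + u * e T) s z = ev d s z + u * ev e s z := by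
  unfold ev
  rw [Finset.mul_sum, ← Finset.sum_add_distrib]
  refine Finset.sum_congr rfl fun T _ => ?_
  ring

lemma ev_mul_prod (d : Finset α → ℂ) (w : α → ℂ) (s : Finset α) (z : α → ℂ) :
    ev (fun T => d T * ∏ i ∈ T, w i) s z = ev d s (fun i => z i * w i) := by
  unfold ev
  refine Finset.sum_congr rfl fun T _ => ?_
  rw [Finset.prod_mul_distrib]
  ring

lemma rf_insert_eval {d : Finset α → ℂ} {j : α} {s : Finset α} (hj : j ∉ s) (z : α → ℂ) :
    ev (rf d (insert j s)) (insert j s) z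
      = ev (rf (fun T => d (insert j T)) s) s z + z j * ev (rf d s) s z := by
  rw [ev_insert _ hj]
  congr 1
  · refine ev_congr_coeff (fun T hT => ?_) z
    have hjT : j ∉ T := fun hmem => hj (Finset.mem_powerset.1 hT hmem)
    unfold rf
    congr 2
    rw [Finset.insert_sdiff_of_notMem _ hjT]
  · congr 1
    refine ev_congr_coeff (fun T hT => ?_) z
    have hTs : T ⊆ s := Finset.mem_powerset.1 hT
    unfold rf
    congr 2
    ext x
    simp only [Finset.mem_sdiff, Finset.mem_insert]
    constructor
    · rintro ⟨hx1 | hx1, hx2⟩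
      · exact absurd (Or.inl hx1) hx2
      · exact ⟨hx1, fun hxT => hx2 (Or.inr hxT)⟩
    · rintro ⟨hx1, hx2⟩
      refine ⟨Or.inr hx1, ?_⟩
      rintro (rfl | hxT)
      · exact hj hx1
      · exact hx2 hxT

/-- The reflection inequality: if a multiaffine polynomial is `𝔻`-stable on `s`,
then its reflection is dominated by it on the polydisc. -/
lemma lemD (s : Finset α) : ∀ d : Finset α → ℂ,
    (∀ z : α → ℂ, (∀ i ∈ s, ‖(z i)‖ < 1) → ev d s z ≠ 0) →
    ∀ z : α → ℂ, (∀ i ∈ s, ‖(z i)‖ < 1) →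
      ‖(ev (rf d s) s z)‖ ≤ ‖(ev d s z)‖ := by
  induction s using Finset.induction_on with
  | empty =>
    intro d _ z _
    rw [ev_empty, ev_empty]
    unfold rf
    simp
  | @insert j s hj ih =>
    intro d hstab z hz
    have hz' : ∀ i ∈ s, ‖(z i)‖ < 1 := fun i hi => hz i (Finset.mem_insert_of_mem hi)
    have hzj : ‖(z j)‖ < 1 := hz j (Finset.mem_insert_self j s)
    set A : ℂ := ev d s z with hA
    set B : ℂ := ev (fun T => d (insert j T)) s z with hB
    set A' : ℂ := ev (rf d s) s z with hA'
    set B' : ℂ := ev (rf (fun T => d (insert j T)) s) s z with hB'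
    -- stability of slices in the last variable at arbitrary z'
    have hslice : ∀ (z' : α → ℂ), (∀ i ∈ s, ‖(z' i)‖ < 1) →
        ∀ u : ℂ, ‖u‖ < 1 →
        ev d s z' + u * ev (fun T => d (insert j T)) s z' ≠ 0 := by
      intro z' hz'' u hu
      have hupd : ∀ i ∈ insert j s, ‖(Function.update z' j u i)‖ < 1 := by
        intro i hi
        rcases Finset.mem_insert.1 hi with rfl | hi'
        · rw [Function.update_self]; exact hu
        · have hne : i ≠ j := by rintro rfl; exact hj hi'
          rw [Function.update_of_ne hne]
          exact hz'' i hi'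
      have h0 := hstab _ hupd
      rw [ev_insert _ hj, Function.update_self] at h0
      have e1 : ev d s (Function.update z' j u) = ev d s z' :=
        ev_congr_var fun i hi => Function.update_of_ne (by rintro rfl; exact hj hi) _ _
      have e2 : ev (fun T => d (insert j T)) s (Function.update z' j u)
          = ev (fun T => d (insert j T)) s z' :=
        ev_congr_var fun i hi => Function.update_of_ne (by rintro rfl; exact hj hi) _ _
      rwa [e1, e2] at h0
    have hBA : ‖B‖ ≤ ‖A‖ :=
      absB_le_absA A B (fun u hu => hslice z hz' u hu)
    have hNLhyp : ∀ u : ℂ, ‖u‖ < 1 →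
        ‖(A' + (starRingEnd ℂ u)*B')‖ ≤ ‖(A + u*B)‖ := by
      intro u hu
      have hstab' : ∀ z' : α → ℂ, (∀ i ∈ s, ‖(z' i)‖ < 1) →
          ev (fun T => d T + u * d (insert j T)) s z' ≠ 0 := by
        intro z' hz''
        rw [ev_add_smul]
        exact hslice z' hz'' u hu
      have hIH := ih _ hstab' z hz'
      rw [ev_add_smul] at hIH
      have hrfeq : ∀ T ∈ s.powerset,
          rf (fun T => d T + u * d (insert j T)) s T
            = rf d s T + (starRingEnd ℂ u) * rf (fun T => d (insert j T)) s T := by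
        intro T _
        unfold rf
        rw [map_add, map_mul]
      rw [ev_congr_coeff hrfeq z,
        ev_add_smul (rf d s) (rf (fun T => d (insert j T)) s) (starRingEnd ℂ u) s z] at hIH
      exact hIH
    have hfin := NL A B A' B' hBA hNLhyp (z j) hzj
    rw [rf_insert_eval hj, ev_insert _ hj]
    exact hfin
end LY

section LY2
variable {α : Type*} [DecidableEq α]

noncomputable def cLY (a : α → α → ℂ) (s S : Finset α) : ℂ := ∏ i ∈ S, ∏ j ∈ s \ S, a i j

lemma lemLY (a : α → α → ℂ) (ha : ∀ i j, ‖(a i j)‖ ≤ 1)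
    (hsym : ∀ i j, a j i = starRingEnd ℂ (a i j)) :
    ∀ s : Finset α, ∀ z : α → ℂ, (∀ i ∈ s, ‖(z i)‖ < 1) →
      ev (cLY a s) s z ≠ 0 := by
  intro s
  induction s using Finset.induction_on with
  | empty =>
    intro z _
    rw [ev_empty]
    simp [cLY]
  | @insert j s hj ih =>
    intro z hz
    have hz' : ∀ i ∈ s, ‖(z i)‖ < 1 := fun i hi => hz i (Finset.mem_insert_of_mem hi)
    have hzj : ‖(z j)‖ < 1 := hz j (Finset.mem_insert_self j s)
    set dA : Finset α → ℂ := fun T => cLY a s T * ∏ i ∈ T, a i j with hdA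
    have lem_coeffA : ∀ T ∈ s.powerset, cLY a (insert j s) T = dA T := by
      intro T hT
      have hTs : T ⊆ s := Finset.mem_powerset.1 hT
      have hjT : j ∉ T := fun hmem => hj (hTs hmem)
      have hjsT : j ∉ s \ T := fun hmem => hj (Finset.mem_sdiff.1 hmem).1
      unfold cLY
      rw [hdA]
      simp only
      rw [Finset.insert_sdiff_of_notMem _ hjT]
      calc ∏ i ∈ T, ∏ l ∈ insert j (s \ T), a i l
          = ∏ i ∈ T, (a i j * ∏ l ∈ s \ T, a i l) :=
            Finset.prod_congr rfl fun i _ => Finset.prod_insert hjsT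
        _ = (∏ i ∈ T, ∏ l ∈ s \ T, a i l) * ∏ i ∈ T, a i j := by
            rw [Finset.prod_mul_distrib]; ring
    have sdiff_eq : ∀ T : Finset α, T ⊆ s → (insert j s) \ (insert j T) = s \ T := by
      intro T hTs
      ext x
      simp only [Finset.mem_sdiff, Finset.mem_insert]
      constructor
      · rintro ⟨hx1 | hx1, hx2⟩
        · exact absurd (Or.inl hx1) hx2
        · exact ⟨hx1, fun hxT => hx2 (Or.inr hxT)⟩
      · rintro ⟨hx1, hx2⟩
        refine ⟨Or.inr hx1, ?_⟩
        rintro (rfl | hxT)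
        · exact hj hx1
        · exact hx2 hxT
    have lem_coeffB : ∀ T ∈ s.powerset, cLY a (insert j s) (insert j T) = rf dA s T := by
      intro T hT
      have hTs : T ⊆ s := Finset.mem_powerset.1 hT
      have hjT : j ∉ T := fun hmem => hj (hTs hmem)
      unfold cLY rf
      rw [sdiff_eq T hTs, Finset.prod_insert hjT]
      rw [hdA]
      simp only [map_mul, map_prod]
      have e1 : starRingEnd ℂ (∏ i ∈ s \ T, ∏ l ∈ s \ (s \ T), a i l)
          = ∏ i ∈ T, ∏ l ∈ s \ T, a i l := by
        rw [Finset.sdiff_sdiff_eq_self hTs, map_prod]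
        have e2 : ∀ i ∈ s \ T, starRingEnd ℂ (∏ l ∈ T, a i l) = ∏ l ∈ T, a l i := by
          intro i _
          rw [map_prod]
          exact Finset.prod_congr rfl fun l _ => (hsym i l).symm
        rw [Finset.prod_congr rfl e2, Finset.prod_comm]
      have e3 : ∀ i ∈ s \ T, starRingEnd ℂ (a i j) = a j i := fun i _ => (hsym i j).symm
      unfold cLY
      rw [e1, Finset.prod_congr rfl e3]
      ring
    have hAstab : ∀ z' : α → ℂ, (∀ i ∈ s, ‖(z' i)‖ < 1) → ev dA s z' ≠ 0 := by
      intro z' hz''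
      have : ev dA s z' = ev (cLY a s) s (fun i => z' i * a i j) :=
        ev_mul_prod (cLY a s) (fun i => a i j) s z'
      rw [this]
      refine ih _ fun i hi => ?_
      calc ‖(z' i * a i j)‖ = ‖(z' i)‖ * ‖(a i j)‖ := norm_mul _ _
        _ ≤ ‖(z' i)‖ * 1 := mul_le_mul_of_nonneg_left (ha i j) (norm_nonneg _)
        _ < 1 := by rw [mul_one]; exact hz'' i hi
    have hdec : ev (cLY a (insert j s)) (insert j s) z = ev dA s z + z j * ev (rf dA s) s z := by
      rw [ev_insert _ hj]
      congr 1
      · exact ev_congr_coeff lem_coeffA z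
      · rw [ev_congr_coeff lem_coeffB z]
    have hA0 : ev dA s z ≠ 0 := hAstab z hz'
    have hle : ‖(ev (rf dA s) s z)‖ ≤ ‖(ev dA s z)‖ := lemD s dA hAstab z hz'
    rw [hdec]
    intro heq
    have h1 : ev dA s z = -(z j * ev (rf dA s) s z) := by linear_combination heq
    have h2 : ‖(ev dA s z)‖ ≤ ‖(z j)‖ * ‖(ev (rf dA s) s z)‖ := by
      rw [h1, norm_neg, norm_mul]
    have hApos : 0 < ‖(ev dA s z)‖ := norm_pos_iff.2 hA0
    nlinarith [mul_le_mul_of_nonneg_left hle (norm_nonneg (z j)),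
      mul_lt_mul_of_pos_right hzj hApos]
end LY2

/-- **A strong form of the Lee–Yang circle theorem.** If `|a i j| ≤ 1` and
`a j i = conj (a i j)` for all `i, j`, then the polynomial
`∑_{S ⊆ {1,…,n}} z^S ∏_{i ∈ S} ∏_{j ∉ S} a i j` is `𝔻`-stable: it does not vanish
when all `z i` lie in the open unit disc. -/
theorem lee_yang_circle (n : ℕ) (hn : 1 ≤ n) (a : Fin n → Fin n → ℂ)
    (ha : ∀ i j, ‖a i j‖ ≤ 1)
    (hsym : ∀ i j, a j i = starRingEnd ℂ (a i j))
    (z : Fin n → ℂ) (hz : ∀ i, ‖z i‖ < 1) :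
    ∑ S : Finset (Fin n), (∏ i ∈ S, z i) * ∏ i ∈ S, ∏ j ∈ Sᶜ, a i j ≠ 0 := by
  have key := lemLY a ha hsym Finset.univ z (fun i _ => hz i)
  have heq : ev (cLY a Finset.univ) Finset.univ z
      = ∑ S : Finset (Fin n), (∏ i ∈ S, z i) * ∏ i ∈ S, ∏ j ∈ Sᶜ, a i j := by
    unfold ev cLY
    rw [Finset.powerset_univ]
    refine Finset.sum_congr rfl fun S _ => ?_
    rw [Finset.compl_eq_univ_sdiff]
    ring
  rwa [heq] at key
end

section
/- Let MAP : ℂ[z₁,…,zₙ] → ℂ[z₁,…,zₙ] be the linear operator extracting the multi-affine part of a polynomial: if f(z) = Σ_{α∈ℕⁿ} a(α) z^α then MAP(f)(z) = Σ_{α : α_i ≤ 1 for all i} a(α) z^α. If f is ℍ_{π/2}-stable, then MAP(f) is either ℍ_{π/2}-stable or identically zero. -/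
open MvPolynomial

/-- The linear operator extracting the multi-affine part of a polynomial:
if `f = ∑_α a(α) z^α` then `MAP f = ∑_{α : α_i ≤ 1 ∀ i} a(α) z^α`. -/
noncomputable def MAP {n : ℕ} (f : MvPolynomial (Fin n) ℂ) : MvPolynomial (Fin n) ℂ :=
  ∑ α ∈ f.support.filter (fun α : Fin n →₀ ℕ => ∀ i, α i ≤ 1),
    monomial α (f.coeff α)

/-- truncation to degree ≤ 1 in variable i -/
noncomputable def Tr {n : ℕ} (i : Fin n) (f : MvPolynomial (Fin n) ℂ) : MvPolynomial (Fin n) ℂ :=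
  ∑ α ∈ f.support.filter (fun α : Fin n →₀ ℕ => α i ≤ 1),
    monomial α (f.coeff α)

lemma coeff_sum_filter {n : ℕ} (f : MvPolynomial (Fin n) ℂ) (P : (Fin n →₀ ℕ) → Prop)
    [DecidablePred P] (β : Fin n →₀ ℕ) :
    coeff β (∑ α ∈ f.support.filter P, monomial α (f.coeff α))
      = if P β then coeff β f else 0 := by
  rw [coeff_sum]
  simp only [coeff_monomial]
  by_cases hP : P β
  · by_cases hs : β ∈ f.support
    · rw [Finset.sum_eq_single β]
      · simp [hP]
      · intro b _ hb; simp [hb]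
      · intro h; exact absurd (Finset.mem_filter.mpr ⟨hs, hP⟩) h
    · rw [if_pos hP, MvPolynomial.notMem_support_iff.mp hs]
      apply Finset.sum_eq_zero
      intro b hb
      have : b ≠ β := by rintro rfl; exact hs (Finset.mem_filter.mp hb).1
      simp [this]
  · rw [if_neg hP]
    apply Finset.sum_eq_zero
    intro b hb
    have : b ≠ β := by rintro rfl; exact hP (Finset.mem_filter.mp hb).2
    simp [this]

lemma coeff_Tr {n : ℕ} (i : Fin n) (f : MvPolynomial (Fin n) ℂ) (β : Fin n →₀ ℕ) :
    coeff β (Tr i f) = if β i ≤ 1 then coeff β f else 0 :=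
  coeff_sum_filter f _ β

lemma coeff_MAP {n : ℕ} (f : MvPolynomial (Fin n) ℂ) (β : Fin n →₀ ℕ) :
    coeff β (MAP f) = if (∀ j, β j ≤ 1) then coeff β f else 0 :=
  coeff_sum_filter f _ β

lemma MAP_eq_foldr {n : ℕ} (f : MvPolynomial (Fin n) ℂ) :
    MAP f = (List.finRange n).foldr Tr f := by
  have key : ∀ (l : List (Fin n)) (g : MvPolynomial (Fin n) ℂ) (β : Fin n →₀ ℕ),
      coeff β (l.foldr Tr g) = if (∀ j ∈ l, β j ≤ 1) then coeff β g else 0 := by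
    intro l
    induction l with
    | nil => intro g β; simp
    | cons a l ih =>
      intro g β
      simp only [List.foldr_cons, coeff_Tr, ih, List.mem_cons]
      by_cases ha : β a ≤ 1
      · by_cases hl : ∀ j ∈ l, β j ≤ 1
        · rw [if_pos ha, if_pos hl, if_pos]
          rintro j (rfl | hj)
          · exact ha
          · exact hl j hj
        · rw [if_pos ha, if_neg hl, if_neg]
          push_neg at hl ⊢
          obtain ⟨j, hj, h⟩ := hl
          exact ⟨j, Or.inr hj, h⟩
      · rw [if_neg ha, if_neg]
        push_neg
        exact ⟨a, Or.inl rfl, by omega⟩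
  apply MvPolynomial.ext
  intro β
  rw [coeff_MAP, key]
  congr 1
  simp

-- evaluating an aeval into Polynomial ℂ
lemma eval_aeval_poly {n : ℕ} (f : MvPolynomial (Fin n) ℂ) (v : Fin n → Polynomial ℂ) (s : ℂ) :
    Polynomial.eval s (MvPolynomial.aeval v f) = eval (fun j => Polynomial.eval s (v j)) f := by
  induction f using MvPolynomial.induction_on with
  | C a => simp
  | add p q hp hq => simp [hp, hq]
  | mul_X p j hp => simp [hp]

-- the univariate polynomial in variable i with the others fixed at z
noncomputable def qz {n : ℕ} (i : Fin n) (z : Fin n → ℂ) (f : MvPolynomial (Fin n) ℂ) :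
    Polynomial ℂ :=
  MvPolynomial.aeval (fun j => if j = i then Polynomial.X else Polynomial.C (z j)) f

lemma eval_qz {n : ℕ} (i : Fin n) (z : Fin n → ℂ) (f : MvPolynomial (Fin n) ℂ) (w : ℂ) :
    Polynomial.eval w (qz i z f) = eval (Function.update z i w) f := by
  rw [qz, eval_aeval_poly]
  have h : (fun j => Polynomial.eval w (if j = i then Polynomial.X else Polynomial.C (z j)))
      = Function.update z i w := by
    funext j
    by_cases h : j = i
    · subst h; simp
    · simp [h, Function.update_apply]
  rw [h]

lemma qz_monomial {n : ℕ} (i : Fin n) (z : Fin n → ℂ) (α : Fin n →₀ ℕ) (a : ℂ) :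
    qz i z (monomial α a)
      = Polynomial.C (a * ∏ j ∈ Finset.univ.erase i, z j ^ α j) * Polynomial.X ^ (α i) := by
  rw [qz, aeval_monomial]
  have h1 : ∀ j : Fin n, (if j = i then Polynomial.X else Polynomial.C (z j)) ^ α j
      = if j = i then Polynomial.X ^ α i else Polynomial.C (z j ^ α j) := by
    intro j
    by_cases h : j = i
    · subst h; simp
    · simp [h]
  rw [Finsupp.prod_fintype _ _ (fun j => by simp)]
  simp_rw [h1]
  rw [← Finset.prod_erase_mul _ _ (Finset.mem_univ i), if_pos rfl]
  have he : ∀ j ∈ Finset.univ.erase i,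
      (if j = i then Polynomial.X ^ α i else Polynomial.C (z j ^ α j))
        = Polynomial.C (z j ^ α j) := fun j hj => if_neg (Finset.mem_erase.mp hj).1
  rw [Finset.prod_congr rfl he]
  rw [show (algebraMap ℂ (Polynomial ℂ)) a = Polynomial.C a from rfl,
    show (∏ x ∈ Finset.univ.erase i, Polynomial.C (z x ^ α x))
      = Polynomial.C (∏ x ∈ Finset.univ.erase i, (z x ^ α x)) from (map_prod (Polynomial.C : ℂ →+* Polynomial ℂ) _ _).symm,
    ← mul_assoc, ← Polynomial.C_mul]

lemma coeff_qz {n : ℕ} (i : Fin n) (z : Fin n → ℂ) (f : MvPolynomial (Fin n) ℂ) (k : ℕ) :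
    (qz i z f).coeff k
      = ∑ α ∈ f.support.filter (fun α => α i = k),
          coeff α f * ∏ j ∈ Finset.univ.erase i, z j ^ α j := by
  conv_lhs => rw [← support_sum_monomial_coeff f]
  rw [show qz i z (∑ v ∈ f.support, monomial v (coeff v f))
      = ∑ v ∈ f.support, qz i z (monomial v (coeff v f)) from map_sum _ _ _]
  rw [Polynomial.finset_sum_coeff]
  simp_rw [qz_monomial, Polynomial.coeff_C_mul, Polynomial.coeff_X_pow]
  rw [Finset.sum_filter]
  apply Finset.sum_congr rfl
  intro α _
  by_cases h : α i = k
  · simp [h]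
  · have : ¬ (k = α i) := fun hk => h hk.symm
    simp [h, this]

lemma eval_Tr_eq {n : ℕ} (i : Fin n) (z : Fin n → ℂ) (f : MvPolynomial (Fin n) ℂ) :
    eval z (Tr i f) = (qz i z f).coeff 0 + (qz i z f).coeff 1 * z i := by
  rw [Tr, map_sum, coeff_qz, coeff_qz]
  have hev : ∀ α : Fin n →₀ ℕ, eval z (monomial α (coeff α f))
      = coeff α f * (∏ j ∈ Finset.univ.erase i, z j ^ α j) * z i ^ α i := by
    intro α
    rw [eval_monomial, Finsupp.prod_fintype _ _ (fun j => by simp),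
      ← Finset.prod_erase_mul _ _ (Finset.mem_univ i), mul_assoc]
  simp_rw [hev]
  have hsplit : f.support.filter (fun α => α i ≤ 1)
      = (f.support.filter (fun α => α i = 0)) ∪ (f.support.filter (fun α => α i = 1)) := by
    rw [← Finset.filter_or]
    apply Finset.filter_congr
    intro α _
    constructor
    · intro h; omega
    · intro h; omega
  rw [hsplit, Finset.sum_union]
  · congr 1
    · apply Finset.sum_congr rfl
      intro α hα
      rw [(Finset.mem_filter.mp hα).2]
      ring
    · rw [Finset.sum_mul]
      apply Finset.sum_congr rfl
      intro α hα
      rw [(Finset.mem_filter.mp hα).2]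
      ring
  · rw [Finset.disjoint_filter]
    intro α _ h0 h1
    omega


lemma multiset_root_sum (M : Multiset ℂ) (hM : ∀ r ∈ M, r ≠ 0 ∧ r.re ≤ 0) :
    (Multiset.map (fun r => Polynomial.X - Polynomial.C r) M).prod.eval 0 ≠ 0 ∧
      0 ≤ ((Polynomial.derivative
          (Multiset.map (fun r => Polynomial.X - Polynomial.C r) M).prod).eval 0 /
        (Multiset.map (fun r => Polynomial.X - Polynomial.C r) M).prod.eval 0).re := by
  induction M using Multiset.induction_on with
  | empty => simp
  | cons r M ih =>
    obtain ⟨hr0, hrre⟩ := hM r (Multiset.mem_cons_self r M)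
    obtain ⟨he, hd⟩ := ih (fun x hx => hM x (Multiset.mem_cons_of_mem hx))
    set Q := (Multiset.map (fun r => Polynomial.X - Polynomial.C r) M).prod with hQ
    have hprod : (Multiset.map (fun r => Polynomial.X - Polynomial.C r) (r ::ₘ M)).prod
        = (Polynomial.X - Polynomial.C r) * Q := by
      rw [Multiset.map_cons, Multiset.prod_cons]
    rw [hprod]
    have hder : Polynomial.derivative ((Polynomial.X - Polynomial.C r) * Q)
        = Q + (Polynomial.X - Polynomial.C r) * Polynomial.derivative Q := by
      rw [Polynomial.derivative_mul]
      simp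
    rw [hder]
    set e := Q.eval 0 with he'
    set d := (Polynomial.derivative Q).eval 0 with hd'
    have heval : ((Polynomial.X - Polynomial.C r) * Q).eval 0 = (-r) * e := by simp [he']
    have heval2 : (Q + (Polynomial.X - Polynomial.C r) * Polynomial.derivative Q).eval 0
        = e + (-r) * d := by simp [he', hd']
    rw [heval, heval2]
    constructor
    · exact mul_ne_zero (neg_ne_zero.mpr hr0) he
    · have key : (e + -r * d) / (-r * e) = -r⁻¹ + d / e := by
        field_simp
        ring
      rw [key, Complex.add_re]
      have h1 : 0 ≤ (-r⁻¹).re := by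
        rw [Complex.neg_re, Complex.inv_re]
        have : 0 < Complex.normSq r := Complex.normSq_pos.mpr hr0
        rw [neg_nonneg]
        exact div_nonpos_of_nonpos_of_nonneg hrre this.le
      exact add_nonneg h1 hd

lemma step2 {n : ℕ} (i : Fin n) (f : MvPolynomial (Fin n) ℂ)
    (hf : ∀ z : Fin n → ℂ, (∀ j, 0 < (z j).re) → eval z f ≠ 0)
    (z : Fin n → ℂ) (hz : ∀ j, 0 < (z j).re)
    (hc0 : (qz i z f).coeff 0 ≠ 0) :
    eval z (Tr i f) ≠ 0 := by
  set p := qz i z f with hp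
  have hp0 : p.eval 0 = p.coeff 0 := by
    rw [Polynomial.coeff_zero_eq_eval_zero]
  have hpne : p ≠ 0 := fun h => hc0 (by rw [hp, ← hp] at *; rw [h]; simp)
  -- p has no zeros in the open right half-plane
  have hstab : ∀ w : ℂ, 0 < w.re → p.eval w ≠ 0 := by
    intro w hw
    rw [hp, eval_qz]
    apply hf
    intro j
    rcases eq_or_ne j i with rfl | hj
    · simpa using hw
    · rw [Function.update_apply, if_neg hj]; exact hz j
  -- all roots have nonpositive real part and are nonzero
  have hroots : ∀ r ∈ p.roots, r ≠ 0 ∧ r.re ≤ 0 := by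
    intro r hr
    have hris : p.IsRoot r := (Polynomial.mem_roots hpne).mp hr
    constructor
    · rintro rfl
      exact hc0 (by rw [← hp0]; exact hris)
    · by_contra h
      push_neg at h
      exact hstab r h hris
  have hsplit := Polynomial.Splits.eq_prod_roots (f := p)
    (IsAlgClosed.splits p)
  obtain ⟨hPe, hPd⟩ := multiset_root_sum p.roots hroots
  set Q := (Multiset.map (fun a => Polynomial.X - Polynomial.C a) p.roots).prod with hQ
  have hc : p.leadingCoeff ≠ 0 := Polynomial.leadingCoeff_ne_zero.mpr hpne
  have hev0 : p.eval 0 = p.leadingCoeff * Q.eval 0 := by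
    conv_lhs => rw [hsplit]
    simp
  have hev1 : (Polynomial.derivative p).eval 0
      = p.leadingCoeff * (Polynomial.derivative Q).eval 0 := by
    conv_lhs => rw [hsplit]
    rw [Polynomial.derivative_C_mul]
    simp
  have hcoeff1 : p.coeff 1 = (Polynomial.derivative p).eval 0 := by
    rw [← Polynomial.coeff_zero_eq_eval_zero, Polynomial.coeff_derivative]
    simp
  -- s = coeff1 / coeff0 has nonnegative real part
  have hs : 0 ≤ (p.coeff 1 / p.coeff 0).re := by
    rw [hcoeff1, ← hp0, hev0, hev1, mul_div_mul_left _ _ hc]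
    exact hPd
  -- conclude
  rw [eval_Tr_eq, ← hp]
  intro hzero
  have hzi : z i ≠ 0 := fun h => by
    have := hz i; rw [h] at this; simp at this
  have h1 : 1 + (p.coeff 1 / p.coeff 0) * z i = 0 := by
    have : p.coeff 0 * (1 + (p.coeff 1 / p.coeff 0) * z i) = 0 := by
      field_simp
      linear_combination hzero
    rcases mul_eq_zero.mp this with h | h
    · exact absurd h hc0
    · exact h
  have : (p.coeff 1 / p.coeff 0) = -(z i)⁻¹ := by
    field_simp at h1 ⊢
    linear_combination h1
  rw [this] at hs
  rw [Complex.neg_re, Complex.inv_re] at hs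
  have hnsq : 0 < Complex.normSq (z i) := Complex.normSq_pos.mpr hzi
  have : 0 < (z i).re / Complex.normSq (z i) := div_pos (hz i) hnsq
  linarith


lemma infinite_pos_re : {y : ℂ | 0 < y.re}.Infinite := by
  refine Set.Infinite.mono ?_ (Set.Infinite.image
    (Set.injOn_of_injective Complex.ofReal_injective) (Set.Ioi_infinite 0))
  rintro y ⟨t, ht, rfl⟩
  simpa using ht

lemma eval_zero_on_omega : ∀ {n : ℕ} (f : MvPolynomial (Fin n) ℂ),
    (∀ z : Fin n → ℂ, (∀ j, 0 < (z j).re) → eval z f = 0) → f = 0 := by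
  intro n
  induction n with
  | zero =>
    intro f h
    rw [MvPolynomial.eq_C_of_isEmpty f]
    have := h (fun j => 1) (fun j => j.elim0)
    rw [MvPolynomial.eq_C_of_isEmpty f] at this
    simp at this
    simp [this]
  | succ m ih =>
    intro f h
    have key : ∀ z : Fin m → ℂ, (∀ j, 0 < (z j).re) →
        Polynomial.map (eval z) (finSuccEquiv ℂ m f) = 0 := by
      intro z hz
      apply Polynomial.eq_zero_of_infinite_isRoot
      refine Set.Infinite.mono ?_ infinite_pos_re
      intro y hy
      have : eval (Fin.cons y z) f = 0 := by
        apply h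
        intro j
        refine Fin.cases ?_ ?_ j
        · simpa using hy
        · intro k; simpa using hz k
      rw [eval_eq_eval_mv_eval'] at this
      exact this
    have hcoeff : ∀ k, (finSuccEquiv ℂ m f).coeff k = 0 := by
      intro k
      apply ih
      intro z hz
      have := key z hz
      have h2 := congrArg (fun p => Polynomial.coeff p k) this
      simpa [Polynomial.coeff_map] using h2
    have : finSuccEquiv ℂ m f = 0 := Polynomial.ext fun k => by rw [hcoeff]; simp
    have := congrArg (finSuccEquiv ℂ m).symm this
    simpa using this

lemma hurwitzH {n : ℕ} (i : Fin n) (f : MvPolynomial (Fin n) ℂ)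
    (hf : ∀ z : Fin n → ℂ, (∀ j, 0 < (z j).re) → eval z f ≠ 0) :
    (∀ z : Fin n → ℂ, (∀ j, 0 < (z j).re) → eval (Function.update z i 0) f = 0) ∨
    (∀ z : Fin n → ℂ, (∀ j, 0 < (z j).re) → eval (Function.update z i 0) f ≠ 0) := by
  by_contra hcon
  push_neg at hcon
  obtain ⟨⟨z1, hz1, hne⟩, ⟨z0, hz0, heq⟩⟩ := hcon
  set zline : ℂ → Fin n → ℂ := fun t j => z0 j + t * (z1 j - z0 j) with hzline
  set Ψ : ℂ × ℝ → ℂ := fun p => eval (Function.update (zline p.1) i ((p.2 : ℝ) : ℂ)) f with hΨ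
  have hΨcont : Continuous Ψ := by
    apply (MvPolynomial.continuous_eval (p := f)).comp
    apply continuous_pi
    intro j
    simp only [Function.update_apply]
    by_cases h : j = i
    · simp only [if_pos h]
      exact Complex.continuous_ofReal.comp continuous_snd
    · simp only [if_neg h, hzline]
      fun_prop
  set qe : ℝ → Polynomial ℂ := fun ε => MvPolynomial.aeval
    (fun j => if j = i then Polynomial.C ((ε : ℝ) : ℂ)
      else Polynomial.C (z0 j) + Polynomial.C (z1 j - z0 j) * Polynomial.X) f with hqe
  have hqe_eval : ∀ (ε : ℝ) (t : ℂ), Polynomial.eval t (qe ε) = Ψ (t, ε) := by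
    intro ε t
    rw [hqe]
    simp only
    rw [eval_aeval_poly]
    have harg : (fun j => Polynomial.eval t (if j = i then Polynomial.C ((ε:ℝ):ℂ)
        else Polynomial.C (z0 j) + Polynomial.C (z1 j - z0 j) * Polynomial.X))
        = Function.update (zline t) i ((ε:ℝ):ℂ) := by
      funext j
      by_cases h : j = i
      · subst h; simp
      · simp [h, Function.update_apply, hzline]
        ring
    rw [harg]
  have hΨ00 : Ψ (0, 0) = 0 := by
    have harg : Function.update (zline 0) i ((0:ℝ):ℂ) = Function.update z0 i 0 := by
      funext j
      by_cases h : j = i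
      · subst h; simp
      · simp [Function.update_apply, h, hzline]
    rw [hΨ]
    simp only
    rw [harg]
    exact heq
  have hq0ne : qe 0 ≠ 0 := by
    intro hz
    have h1 : Ψ (1, 0) = 0 := by rw [← hqe_eval 0 1, hz]; simp
    have harg : Function.update (zline 1) i ((0:ℝ):ℂ) = Function.update z1 i 0 := by
      funext j
      by_cases h : j = i
      · subst h; simp
      · simp [Function.update_apply, h, hzline]
    rw [hΨ] at h1
    simp only at h1
    rw [harg] at h1
    exact hne h1
  -- choose radius
  have hU : IsOpen {t : ℂ | ∀ j, 0 < (zline t j).re} := by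
    have hrw : {t : ℂ | ∀ j, 0 < (zline t j).re} = ⋂ j, {t : ℂ | 0 < (zline t j).re} := by
      ext t; simp
    rw [hrw]
    apply isOpen_iInter_of_finite
    intro j
    have : Continuous fun t : ℂ => (zline t j).re := by
      apply Complex.continuous_re.comp
      simp only [hzline]
      fun_prop
    exact isOpen_Ioi.preimage this
  have h0U : (0:ℂ) ∈ {t : ℂ | ∀ j, 0 < (zline t j).re} := by
    intro j
    simp only [hzline, zero_mul, add_zero]
    exact hz0 j
  obtain ⟨ε2, hε2pos, hball2⟩ := Metric.isOpen_iff.mp hU 0 h0U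
  have hTfin : ({x : ℂ | (qe 0).IsRoot x} \ {0}).Finite :=
    (Polynomial.finite_setOf_isRoot hq0ne).subset Set.diff_subset
  have hTopen : IsOpen ({x : ℂ | (qe 0).IsRoot x} \ {0})ᶜ := hTfin.isClosed.isOpen_compl
  have h0T : (0:ℂ) ∈ ({x : ℂ | (qe 0).IsRoot x} \ {0})ᶜ := by simp
  obtain ⟨ε1, hε1pos, hball1⟩ := Metric.isOpen_iff.mp hTopen 0 h0T
  set r : ℝ := min (ε1/2) (ε2/2) with hrdef
  have hr : 0 < r := lt_min (by linarith) (by linarith)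
  have hposcoord : ∀ t : ℂ, ‖t‖ ≤ r → ∀ j, 0 < (zline t j).re := by
    intro t ht j
    have : t ∈ Metric.ball (0:ℂ) ε2 := by
      rw [Metric.mem_ball, dist_zero_right]
      calc ‖t‖ ≤ r := ht
        _ ≤ ε2/2 := min_le_right _ _
        _ < ε2 := by linarith
    exact hball2 this j
  have hstab : ∀ (t : ℂ) (ε : ℝ), ‖t‖ ≤ r → 0 < ε → Ψ (t, ε) ≠ 0 := by
    intro t ε ht hε
    apply hf
    intro j
    rcases eq_or_ne j i with rfl | hj
    · simp only [Function.update_self]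
      simpa using hε
    · rw [Function.update_apply, if_neg hj]
      exact hposcoord t ht j
  have hsphere0 : ∀ t : ℂ, ‖t‖ = r → Ψ (t, 0) ≠ 0 := by
    intro t ht
    rw [← hqe_eval 0 t]
    have htne : t ≠ 0 := by
      intro h; rw [h] at ht; simp at ht; exact hr.ne ht
    have : t ∈ Metric.ball (0:ℂ) ε1 := by
      rw [Metric.mem_ball, dist_zero_right, ht]
      calc r ≤ ε1/2 := min_le_left _ _
        _ < ε1 := by linarith
    have := hball1 this
    simp only [Set.mem_compl_iff, Set.mem_diff, Set.mem_setOf_eq, Set.mem_singleton_iff,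
      not_and, not_not] at this
    intro hroot
    exact htne (this hroot)
  -- compactness: minimum on sphere × [0,1]
  set K : Set (ℂ × ℝ) := Metric.sphere (0:ℂ) r ×ˢ Set.Icc (0:ℝ) 1 with hK
  have hKcomp : IsCompact K := (isCompact_sphere _ _).prod isCompact_Icc
  have hKne : K.Nonempty := by
    refine ⟨((r:ℂ), 0), ?_, ?_⟩
    · simp only [Metric.mem_sphere, dist_zero_right, Complex.norm_real, Real.norm_eq_abs]
      exact abs_of_pos hr
    · exact ⟨le_refl 0, zero_le_one⟩
  obtain ⟨p₀, hp₀K, hp₀min⟩ := hKcomp.exists_isMinOn hKne hΨcont.norm.continuousOn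
  set m : ℝ := ‖Ψ p₀‖ with hm'
  have hm : 0 < m := by
    rw [hm', norm_pos_iff]
    obtain ⟨hp1, hp2⟩ := hp₀K
    have hp1' : ‖p₀.1‖ = r := by rwa [Metric.mem_sphere, dist_zero_right] at hp1
    rcases eq_or_lt_of_le hp2.1 with h0 | h0
    · have hpe : Ψ p₀ = Ψ (p₀.1, 0) := by
        have hp : p₀ = (p₀.1, p₀.2) := rfl
        rw [hp, ← h0]
      rw [hpe]
      exact hsphere0 p₀.1 hp1'
    · exact hstab p₀.1 p₀.2 hp1'.le h0
  -- minimum modulus principle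
  have hmin : ∀ ε : ℝ, 0 < ε → ε ≤ 1 → m ≤ ‖Ψ (0, ε)‖ := by
    intro ε hε hε1
    have hqnz : ∀ t ∈ Metric.closedBall (0:ℂ) r, Polynomial.eval t (qe ε) ≠ 0 := by
      intro t ht
      rw [Metric.mem_closedBall, dist_zero_right] at ht
      rw [hqe_eval]
      exact hstab t ε ht hε
    have hdc : DiffContOnCl ℂ (fun t => (Polynomial.eval t (qe ε))⁻¹) (Metric.ball 0 r) := by
      constructor
      · exact DifferentiableOn.inv ((qe ε).differentiable.differentiableOn)
          (fun x hx => hqnz x (Metric.ball_subset_closedBall hx))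
      · rw [closure_ball 0 hr.ne']
        exact ContinuousOn.inv₀ ((qe ε).continuous.continuousOn) hqnz
    have hfr : ∀ t ∈ frontier (Metric.ball (0:ℂ) r),
        ‖(Polynomial.eval t (qe ε))⁻¹‖ ≤ m⁻¹ := by
      intro t ht
      rw [frontier_ball 0 hr.ne'] at ht
      have ht' : ‖t‖ = r := by rwa [mem_sphere_zero_iff_norm] at ht
      have hmem : (t, ε) ∈ K := by
        refine ⟨?_, hε.le, hε1⟩
        rwa [Metric.mem_sphere, dist_zero_right]
      have hge : m ≤ ‖Ψ (t, ε)‖ := hp₀min hmem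
      rw [hqe_eval, norm_inv]
      exact inv_anti₀ hm hge
    have h0cl : (0:ℂ) ∈ closure (Metric.ball (0:ℂ) r) := by
      rw [closure_ball 0 hr.ne']
      simp [hr.le]
    have := Complex.norm_le_of_forall_mem_frontier_norm_le Metric.isBounded_ball hdc hfr h0cl
    rw [hqe_eval, norm_inv] at this
    have hΨ0 : Ψ (0, ε) ≠ 0 := hstab 0 ε (by simp [hr.le]) hε
    exact (inv_le_inv₀ (norm_pos_iff.mpr hΨ0) hm).mp this
  -- contradiction via continuity at ε = 0
  have hcont0 : ContinuousAt (fun ε : ℝ => ‖Ψ (0, ε)‖) 0 := by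
    apply Continuous.continuousAt
    exact hΨcont.norm.comp (by fun_prop)
  have hneb : (nhdsWithin (0:ℝ) (Set.Ioc 0 1)).NeBot := by
    apply mem_closure_iff_nhdsWithin_neBot.mp
    rw [closure_Ioc one_ne_zero.symm]
    exact ⟨le_refl 0, zero_le_one⟩
  have hlim : m ≤ ‖Ψ (0, (0:ℝ))‖ := by
    apply ge_of_tendsto (x := nhdsWithin (0:ℝ) (Set.Ioc 0 1))
      (hcont0.continuousWithinAt.tendsto)
    apply Filter.eventually_of_mem self_mem_nhdsWithin
    intro x hx
    exact hmin x hx.1 hx.2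
  rw [hΨ00] at hlim
  simp at hlim
  linarith

lemma eval_g0 {n : ℕ} (i : Fin n) (z : Fin n → ℂ) (f : MvPolynomial (Fin n) ℂ) :
    eval z (∑ α ∈ f.support.filter (fun α : Fin n →₀ ℕ => α i = 0), monomial α (f.coeff α))
      = (qz i z f).coeff 0 := by
  rw [map_sum, coeff_qz]
  apply Finset.sum_congr rfl
  intro α hα
  have hα0 : α i = 0 := (Finset.mem_filter.mp hα).2
  rw [eval_monomial, Finsupp.prod_fintype _ _ (fun j => by simp),
    ← Finset.prod_erase_mul _ _ (Finset.mem_univ i), hα0]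
  simp [MvPolynomial.coeff]

lemma X_dvd_of_coeff {n : ℕ} (i : Fin n) (f : MvPolynomial (Fin n) ℂ)
    (h : ∀ β : Fin n →₀ ℕ, β i = 0 → coeff β f = 0) : X i ∣ f := by
  rw [MvPolynomial.X_dvd_iff_modMonomial_eq_zero]
  apply MvPolynomial.ext
  intro β
  rw [coeff_zero]
  by_cases hle : Finsupp.single i 1 ≤ β
  · exact MvPolynomial.coeff_modMonomial_of_le f hle
  · rw [MvPolynomial.coeff_modMonomial_of_not_le f hle]
    apply h
    rw [Finsupp.single_le_iff] at hle
    omega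

lemma Tr_preserves {n : ℕ} (i : Fin n) (f : MvPolynomial (Fin n) ℂ)
    (hf : ∀ z : Fin n → ℂ, (∀ j, 0 < (z j).re) → eval z f ≠ 0) :
    Tr i f = 0 ∨ ∀ z : Fin n → ℂ, (∀ j, 0 < (z j).re) → eval z (Tr i f) ≠ 0 := by
  by_cases hst : ∀ z : Fin n → ℂ, (∀ j, 0 < (z j).re) → eval z (Tr i f) ≠ 0
  · exact Or.inr hst
  push_neg at hst
  obtain ⟨z₀, hz₀, hev0⟩ := hst
  left
  -- coeff 0 of the slice polynomial vanishes at z₀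
  have hc00 : (qz i z₀ f).coeff 0 = 0 := by
    by_contra hc
    exact step2 i f hf z₀ hz₀ hc hev0
  have hz₀i : z₀ i ≠ 0 := fun h => by have := hz₀ i; rw [h] at this; simp at this
  have hc10 : (qz i z₀ f).coeff 1 = 0 := by
    have := eval_Tr_eq i z₀ f
    rw [hev0, hc00, zero_add] at this
    exact (mul_eq_zero.mp this.symm).resolve_right hz₀i
  -- coeff-0 relation to evaluation with i-th coordinate zero
  have hc0ev : ∀ z : Fin n → ℂ, (qz i z f).coeff 0 = eval (Function.update z i 0) f := by
    intro z
    rw [Polynomial.coeff_zero_eq_eval_zero, eval_qz]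
  -- Hurwitz: coeff 0 vanishes identically on Ω
  have hg0 : ∀ z : Fin n → ℂ, (∀ j, 0 < (z j).re) → (qz i z f).coeff 0 = 0 := by
    rcases hurwitzH i f hf with h | h
    · intro z hz; rw [hc0ev]; exact h z hz
    · exfalso
      exact h z₀ hz₀ (by rw [← hc0ev]; exact hc00)
  -- hence all coefficients with β i = 0 vanish
  have hcoeffs : ∀ β : Fin n →₀ ℕ, β i = 0 → coeff β f = 0 := by
    have hgz : (∑ α ∈ f.support.filter (fun α : Fin n →₀ ℕ => α i = 0),
        monomial α (f.coeff α)) = 0 := by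
      apply eval_zero_on_omega
      intro z hz
      rw [eval_g0]
      exact hg0 z hz
    intro β hβ
    have := congrArg (coeff β) hgz
    rwa [coeff_sum_filter, if_pos hβ, coeff_zero] at this
  obtain ⟨f', rfl⟩ := X_dvd_of_coeff i f hcoeffs
  -- f' is stable
  have hf' : ∀ z : Fin n → ℂ, (∀ j, 0 < (z j).re) → eval z f' ≠ 0 := by
    intro z hz
    have := hf z hz
    rw [map_mul] at this
    exact fun h => this (by rw [h, mul_zero])
  -- coeff 1 of slice of f equals coeff 0 of slice of f'
  have hqzrel : ∀ z : Fin n → ℂ, (qz i z (X i * f')).coeff 1 = (qz i z f').coeff 0 := by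
    intro z
    rw [show qz i z (X i * f') = qz i z (X i) * qz i z f' from map_mul _ _ _]
    have hXi : qz i z (X i) = Polynomial.X := by rw [qz, aeval_X, if_pos rfl]
    rw [hXi, Polynomial.coeff_X_mul]
  -- Hurwitz for f' : coeff 1 vanishes identically on Ω
  have hg1 : ∀ z : Fin n → ℂ, (∀ j, 0 < (z j).re) → (qz i z (X i * f')).coeff 0 = 0
      ∧ (qz i z (X i * f')).coeff 1 = 0 := by
    intro z hz
    refine ⟨hg0 z hz, ?_⟩
    rw [hqzrel]
    rcases hurwitzH i f' hf' with h | h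
    · rw [Polynomial.coeff_zero_eq_eval_zero, eval_qz]
      exact h z hz
    · exfalso
      apply h z₀ hz₀
      rw [← eval_qz, ← Polynomial.coeff_zero_eq_eval_zero, ← hqzrel]
      exact hc10
  -- conclude Tr i f = 0
  apply eval_zero_on_omega
  intro z hz
  rw [eval_Tr_eq, (hg1 z hz).1, (hg1 z hz).2, zero_add, zero_mul]

lemma Tr_zero {n : ℕ} (i : Fin n) : Tr i (0 : MvPolynomial (Fin n) ℂ) = 0 := by
  apply MvPolynomial.ext
  intro β
  rw [coeff_Tr]
  simp

/-- The multi-affine part operator `MAP` preserves stability with respect to the open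
right half-plane `ℍ_{π/2} = {ζ : Re ζ > 0}`. -/
theorem MAP_preserves_right_halfplane_stability (n : ℕ) (f : MvPolynomial (Fin n) ℂ)
    (hf : ∀ z : Fin n → ℂ, (∀ i, 0 < (z i).re) → eval z f ≠ 0) :
    MAP f = 0 ∨ ∀ z : Fin n → ℂ, (∀ i, 0 < (z i).re) → eval z (MAP f) ≠ 0 := by
  rw [MAP_eq_foldr]
  have key : ∀ (l : List (Fin n)) (g : MvPolynomial (Fin n) ℂ),
      (g = 0 ∨ ∀ z : Fin n → ℂ, (∀ i, 0 < (z i).re) → eval z g ≠ 0) →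
      (l.foldr Tr g = 0 ∨
        ∀ z : Fin n → ℂ, (∀ i, 0 < (z i).re) → eval z (l.foldr Tr g) ≠ 0) := by
    intro l
    induction l with
    | nil => exact fun g hg => hg
    | cons a l ih =>
      intro g hg
      rcases ih g hg with h | h
      · left
        rw [List.foldr_cons, h, Tr_zero]
      · exact Tr_preserves a _ h
  exact key _ f (Or.inr hf)
end

section
/- Let G = (V,E) be a finite graph with V = {1,…,n} and non-negative edge weights λ_e ≥ 0 for e ∈ E, and form F_G(z,λ) = Π_{e={i,j}∈E} (1 + λ_e z_i z_j) ∈ ℂ[z₁,…,zₙ]. Then the multivariate Heilmann–Lieb matching polynomial MAP[F_G(z,λ)] is ℍ_{π/2}-stable, i.e., nonzero whenever Re(z_i) > 0 for all 1 ≤ i ≤ n. -/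
open MvPolynomial Finset


set_option linter.unnecessarySeqFocus false
set_option linter.unreachableTactic false
set_option linter.unusedTactic false

namespace HL

variable {n : ℕ}

lemma coeff_MAP (f : MvPolynomial (Fin n) ℂ) (α : Fin n →₀ ℕ) :
    coeff α (MAP f) = if (∀ i, α i ≤ 1) then coeff α f else 0 := by
  unfold MAP
  rw [MvPolynomial.coeff_sum]
  simp only [coeff_monomial]
  rw [Finset.sum_ite_eq' (f.support.filter (fun α : Fin n →₀ ℕ => ∀ i, α i ≤ 1)) α
      (fun β => f.coeff β)]
  by_cases hP : ∀ i, α i ≤ 1 <;> by_cases hs : α ∈ f.support <;>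
    simp [Finset.mem_filter, hP, hs] <;>
    exact (by simpa [MvPolynomial.mem_support_iff, not_not] using hs : coeff α f = 0).symm

lemma MAP_sum {ι : Type*} (s : Finset ι) (f : ι → MvPolynomial (Fin n) ℂ) :
    MAP (∑ i ∈ s, f i) = ∑ i ∈ s, MAP (f i) := by
  ext α
  rw [coeff_MAP, MvPolynomial.coeff_sum, MvPolynomial.coeff_sum]
  split_ifs with h
  · simp [coeff_MAP, h]
  · simp [coeff_MAP, h]

lemma MAP_monomial (α : Fin n →₀ ℕ) (c : ℂ) :
    MAP (monomial α c) = if (∀ i, α i ≤ 1) then monomial α c else 0 := by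
  ext β
  rw [coeff_MAP, coeff_monomial]
  by_cases h : α = β
  · subst h; split_ifs with h1 h2 <;> simp_all [coeff_monomial]
  · split_ifs <;> simp [coeff_monomial, h]

lemma prod_monomial {ι : Type*} (S : Finset ι) (d : ι → (Fin n →₀ ℕ)) (c : ι → ℂ) :
    ∏ e ∈ S, monomial (d e) (c e) = monomial (∑ e ∈ S, d e) (∏ e ∈ S, c e) := by
  classical
  induction S using Finset.induction_on with
  | empty => simp [monomial_zero']
  | insert a s h ih =>
                   rw [Finset.prod_insert h, ih, Finset.sum_insert h, Finset.prod_insert h,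
                     monomial_mul]

lemma factor_eq (i j : Fin n) (c : ℂ) :
    (C c * X i * X j : MvPolynomial (Fin n) ℂ)
      = monomial (Finsupp.single i 1 + Finsupp.single j 1) c := by
  rw [MvPolynomial.C_mul_X_eq_monomial, MvPolynomial.X, monomial_mul, mul_one]


def touch (e : Fin n × Fin n) (i : Fin n) : ℕ :=
  (if e.1 = i then 1 else 0) + (if e.2 = i then 1 else 0)

def deg (S : Finset (Fin n × Fin n)) (i : Fin n) : ℕ := ∑ e ∈ S, touch e i

def isM (S : Finset (Fin n × Fin n)) : Prop := ∀ i, deg S i ≤ 1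

instance : DecidablePred (isM (n := n)) := fun _ => Fintype.decidableForallFintype

lemma alpha_apply (S : Finset (Fin n × Fin n)) (i : Fin n) :
    ((∑ e ∈ S, (Finsupp.single e.1 1 + Finsupp.single e.2 1) : Fin n →₀ ℕ)) i = deg S i := by
  rw [Finsupp.finset_sum_apply]
  unfold deg touch
  refine Finset.sum_congr rfl fun e _ => ?_
  simp [Finsupp.single_apply]


lemma part1 (E : Finset (Fin n × Fin n)) (lam : Fin n × Fin n → ℝ) (z : Fin n → ℂ) :
    eval z (MAP (∏ e ∈ E, (1 + C ((lam e : ℝ) : ℂ) * X e.1 * X e.2)))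
      = ∑ S ∈ E.powerset.filter isM, ∏ e ∈ S, ((lam e : ℂ) * z e.1 * z e.2) := by
  have hfac : ∀ e : Fin n × Fin n, (C ((lam e : ℝ) : ℂ) * X e.1 * X e.2 : MvPolynomial (Fin n) ℂ)
      = monomial (Finsupp.single e.1 1 + Finsupp.single e.2 1) ((lam e : ℝ) : ℂ) :=
    fun e => factor_eq _ _ _
  have hexp : (∏ e ∈ E, (1 + C ((lam e : ℝ) : ℂ) * X e.1 * X e.2))
      = ∑ S ∈ E.powerset, monomial (∑ e ∈ S, (Finsupp.single e.1 1 + Finsupp.single e.2 1))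
          (∏ e ∈ S, ((lam e : ℝ) : ℂ)) := by
    simp_rw [add_comm (1 : MvPolynomial (Fin n) ℂ)]
    rw [Finset.prod_add]
    refine Finset.sum_congr rfl fun S _ => ?_
    rw [Finset.prod_const_one, mul_one]
    simp_rw [hfac]
    exact prod_monomial _ _ _
  rw [hexp, MAP_sum]
  have hMAP : ∀ S ∈ E.powerset,
      MAP (monomial (∑ e ∈ S, (Finsupp.single e.1 1 + Finsupp.single e.2 1))
        (∏ e ∈ S, ((lam e : ℝ) : ℂ)))
      = if isM S then monomial (∑ e ∈ S, (Finsupp.single e.1 1 + Finsupp.single e.2 1))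
          (∏ e ∈ S, ((lam e : ℝ) : ℂ)) else 0 := by
    intro S _
    rw [MAP_monomial]
    congr 1
    simp only [eq_iff_iff]
    unfold isM
    constructor
    · intro h i; rw [← alpha_apply]; exact h i
    · intro h i; rw [alpha_apply]; exact h i
  rw [Finset.sum_congr rfl hMAP, ← Finset.sum_filter]
  rw [map_sum]
  refine Finset.sum_congr rfl fun S _ => ?_
  rw [← prod_monomial S (fun e => (Finsupp.single e.1 1 + Finsupp.single e.2 1))
    (fun e => ((lam e : ℝ) : ℂ)), map_prod]
  refine Finset.prod_congr rfl fun e _ => ?_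
  rw [← hfac]
  simp [mul_assoc]


def verts (S : Finset (Fin n × Fin n)) : Finset (Fin n) :=
  univ.filter (fun i => 0 < deg S i)

def mset (E : Finset (Fin n × Fin n)) (A : Finset (Fin n)) : Finset (Finset (Fin n × Fin n)) :=
  E.powerset.filter (fun S => isM S ∧ ∀ e ∈ S, e.1 ∈ A ∧ e.2 ∈ A)

noncomputable def g (E : Finset (Fin n × Fin n)) (lam : Fin n × Fin n → ℝ) (x : Fin n → ℂ)
    (A : Finset (Fin n)) : ℂ :=
  ∑ S ∈ mset E A, (∏ e ∈ S, (lam e : ℂ)) * ∏ i ∈ A \ verts S, x i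

lemma mem_mset {E : Finset (Fin n × Fin n)} {A : Finset (Fin n)} {S : Finset (Fin n × Fin n)} :
    S ∈ mset E A ↔ S ⊆ E ∧ isM S ∧ ∀ e ∈ S, e.1 ∈ A ∧ e.2 ∈ A := by
  simp [mset, and_assoc]

lemma prod_zz (z : Fin n → ℂ) (S : Finset (Fin n × Fin n)) (hS : isM S) :
    ∏ e ∈ S, (z e.1 * z e.2) = ∏ i ∈ verts S, z i := by
  have h1 : ∀ e : Fin n × Fin n, z e.1 * z e.2 = ∏ i : Fin n, z i ^ touch e i := by
    intro e
    unfold touch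
    simp_rw [pow_add]
    rw [Finset.prod_mul_distrib]
    congr 1
    · rw [show (∏ i : Fin n, z i ^ (if e.1 = i then 1 else 0))
        = ∏ i : Fin n, (if e.1 = i then z i else 1) by
          refine Finset.prod_congr rfl fun i _ => ?_; split_ifs <;> simp]
      simp
    · rw [show (∏ i : Fin n, z i ^ (if e.2 = i then 1 else 0))
        = ∏ i : Fin n, (if e.2 = i then z i else 1) by
          refine Finset.prod_congr rfl fun i _ => ?_; split_ifs <;> simp]
      simp
  simp_rw [h1]
  rw [Finset.prod_comm]
  have h2 : ∀ i : Fin n, ∏ e ∈ S, z i ^ touch e i = z i ^ deg S i := by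
    intro i; rw [deg, Finset.prod_pow_eq_pow_sum]
  simp_rw [h2]
  rw [← Finset.prod_filter_mul_prod_filter_not Finset.univ (fun i => 0 < deg S i)]
  have h3 : ∏ i ∈ univ.filter (fun i => ¬ 0 < deg S i), z i ^ deg S i = 1 := by
    refine Finset.prod_eq_one fun i hi => ?_
    rw [Finset.mem_filter] at hi
    have : deg S i = 0 := by omega
    simp [this]
  rw [h3, mul_one, verts]
  refine Finset.prod_congr rfl fun i hi => ?_
  rw [Finset.mem_filter] at hi
  have : deg S i = 1 := le_antisymm (hS i) hi.2
  simp [this]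

lemma bridge (E : Finset (Fin n × Fin n)) (lam : Fin n × Fin n → ℝ) (z : Fin n → ℂ)
    (hz : ∀ i, z i ≠ 0) :
    ∑ S ∈ E.powerset.filter isM, ∏ e ∈ S, ((lam e : ℂ) * z e.1 * z e.2)
      = (∏ i : Fin n, z i) * g E lam (fun i => (z i)⁻¹) univ := by
  rw [g, Finset.mul_sum]
  have hset : E.powerset.filter isM = mset E univ := by
    ext S; simp [mem_mset, Finset.mem_filter, Finset.mem_powerset]
  rw [hset]
  refine Finset.sum_congr rfl fun S hS => ?_
  rw [mem_mset] at hS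
  have hprod : ∏ e ∈ S, ((lam e : ℂ) * z e.1 * z e.2)
      = (∏ e ∈ S, (lam e : ℂ)) * ∏ i ∈ verts S, z i := by
    rw [← prod_zz z S hS.2.1, ← Finset.prod_mul_distrib]
    exact Finset.prod_congr rfl fun e _ => by ring
  rw [hprod]
  have hsub : verts S ⊆ univ := Finset.subset_univ _
  rw [← Finset.prod_sdiff hsub]
  have hw : (∏ i ∈ univ \ verts S, z i) ≠ 0 := Finset.prod_ne_zero_iff.mpr fun i _ => hz i
  have hiv : (∏ i ∈ univ \ verts S, (z i)⁻¹) = (∏ i ∈ univ \ verts S, z i)⁻¹ :=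
    Finset.prod_inv_distrib _
  rw [hiv]
  field_simp

def Ev (E : Finset (Fin n × Fin n)) (A : Finset (Fin n)) (v : Fin n) :
    Finset (Fin n × Fin n) :=
  E.filter (fun e => (e.1 = v ∧ e.2 ∈ A.erase v) ∨ (e.2 = v ∧ e.1 ∈ A.erase v))

def other (v : Fin n) (e : Fin n × Fin n) : Fin n := if e.1 = v then e.2 else e.1

lemma touch_le_deg {S : Finset (Fin n × Fin n)} {e : Fin n × Fin n} (he : e ∈ S) (i : Fin n) :
    touch e i ≤ deg S i :=
  Finset.single_le_sum (f := fun e => touch e i) (fun _ _ => Nat.zero_le _) he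

lemma mset_touch_zero {E : Finset (Fin n × Fin n)} {A : Finset (Fin n)}
    {S : Finset (Fin n × Fin n)} (hS : S ∈ mset E A) {i : Fin n} (hi : i ∉ A) :
    ∀ e ∈ S, touch e i = 0 := by
  intro e he
  obtain ⟨-, -, h⟩ := mem_mset.mp hS
  obtain ⟨h1, h2⟩ := h e he
  have ha : e.1 ≠ i := fun hh => hi (hh ▸ h1)
  have hb : e.2 ≠ i := fun hh => hi (hh ▸ h2)
  unfold touch
  rw [if_neg ha, if_neg hb]

lemma mset_deg_zero {E : Finset (Fin n × Fin n)} {A : Finset (Fin n)}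
    {S : Finset (Fin n × Fin n)} (hS : S ∈ mset E A) {i : Fin n} (hi : i ∉ A) :
    deg S i = 0 :=
  Finset.sum_eq_zero (mset_touch_zero hS hi)

lemma Ev_other {E : Finset (Fin n × Fin n)} {A : Finset (Fin n)} {v : Fin n}
    {e : Fin n × Fin n} (he : e ∈ Ev E A v) :
    e ∈ E ∧ other v e ∈ A.erase v ∧
      ∀ i, touch e i = (if v = i then 1 else 0) + (if other v e = i then 1 else 0) := by
  simp only [Ev, mem_filter] at he
  obtain ⟨heE, hor⟩ := he
  rcases hor with ⟨h1, h2⟩ | ⟨h1, h2⟩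
  · refine ⟨heE, ?_, ?_⟩
    · unfold other; rw [if_pos h1]; exact h2
    · intro i; unfold touch other; rw [if_pos h1, h1]
  · have hne : e.1 ≠ v := (Finset.mem_erase.mp h2).1
    refine ⟨heE, ?_, ?_⟩
    · unfold other; rw [if_neg hne]; exact h2
    · intro i; unfold touch other; rw [if_neg hne, h1, add_comm]

lemma deg_insert {S : Finset (Fin n × Fin n)} {e : Fin n × Fin n} (he : e ∉ S) (i : Fin n) :
    deg (insert e S) i = touch e i + deg S i := by
  unfold deg; rw [Finset.sum_insert he]


lemma rec_g (E : Finset (Fin n × Fin n)) (lam : Fin n × Fin n → ℝ) (x : Fin n → ℂ)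
    (A : Finset (Fin n)) (v : Fin n) (hv : v ∈ A) :
    g E lam x A = x v * g E lam x (A.erase v)
      + ∑ e ∈ Ev E A v, (lam e : ℂ) * g E lam x ((A.erase v).erase (other v e)) := by
  classical
  have huncovEq : ∑ S ∈ (mset E A).filter (fun S => ¬ 0 < deg S v),
      ((∏ e ∈ S, (lam e : ℂ)) * ∏ i ∈ A \ verts S, x i)
      = x v * g E lam x (A.erase v) := by
    have huncov : (mset E A).filter (fun S => ¬ 0 < deg S v) = mset E (A.erase v) := by
      ext S
      simp only [Finset.mem_filter, mem_mset, Nat.pos_iff_ne_zero, not_not]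
      constructor
      · rintro ⟨⟨h1, h2, h3⟩, h4⟩
        refine ⟨h1, h2, fun e he => ?_⟩
        obtain ⟨ha, hb⟩ := h3 e he
        have ht : touch e v = 0 := Nat.eq_zero_of_le_zero (h4 ▸ touch_le_deg he v)
        unfold touch at ht
        refine ⟨Finset.mem_erase.mpr ⟨?_, ha⟩, Finset.mem_erase.mpr ⟨?_, hb⟩⟩ <;>
          · intro hh; rw [hh] at ht; simp at ht
      · rintro ⟨h1, h2, h3⟩
        refine ⟨⟨h1, h2, fun e he => ⟨Finset.mem_erase.mp ((h3 e he).1) |>.2,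
          Finset.mem_erase.mp ((h3 e he).2) |>.2⟩⟩, ?_⟩
        exact mset_deg_zero (mem_mset.mpr ⟨h1, h2, h3⟩) (Finset.notMem_erase v A)
    rw [huncov]
    unfold g
    rw [Finset.mul_sum]
    refine Finset.sum_congr rfl fun S hS => ?_
    have hdv : deg S v = 0 := mset_deg_zero hS (Finset.notMem_erase v A)
    have hvmem : v ∈ A \ verts S := by
      simp [Finset.mem_sdiff, verts, hv, hdv]
    rw [← Finset.mul_prod_erase _ _ hvmem]
    have hset : (A \ verts S).erase v = A.erase v \ verts S := by
      ext i
      simp only [Finset.mem_erase, Finset.mem_sdiff]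
      tauto
    rw [hset]; ring
  have hcovEq : ∑ S ∈ (mset E A).filter (fun S => 0 < deg S v),
      ((∏ e ∈ S, (lam e : ℂ)) * ∏ i ∈ A \ verts S, x i)
      = ∑ e ∈ Ev E A v, (lam e : ℂ) * g E lam x ((A.erase v).erase (other v e)) := by
    have hcov : (mset E A).filter (fun S => 0 < deg S v)
        = (Ev E A v).biUnion (fun e =>
            (mset E ((A.erase v).erase (other v e))).image (insert e)) := by
      ext S
      simp only [Finset.mem_filter, Finset.mem_biUnion, Finset.mem_image]
      constructor
      · rintro ⟨hS, hpos⟩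
        obtain ⟨h1, h2, h3⟩ := mem_mset.mp hS
        have : ∃ e ∈ S, touch e v ≠ 0 := by
          by_contra hc
          push_neg at hc
          have : deg S v = 0 := Finset.sum_eq_zero hc
          omega
        obtain ⟨e, heS, het⟩ := this
        have heE : e ∈ E := h1 heS
        have hend : e.1 ∈ A ∧ e.2 ∈ A := h3 e heS
        have hdeg1 : deg S v ≤ 1 := h2 v
        have htle : touch e v ≤ 1 := le_trans (touch_le_deg heS v) hdeg1
        have hcases : (e.1 = v ∧ e.2 ≠ v) ∨ (e.2 = v ∧ e.1 ≠ v) := by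
          unfold touch at het htle
          split_ifs at het htle <;> tauto
        set u := other v e with hu
        have key : (e.1 = v ∧ u = e.2 ∧ u ≠ v ∧ u ∈ A) ∨
            (e.2 = v ∧ u = e.1 ∧ u ≠ v ∧ u ∈ A) := by
          rcases hcases with ⟨h, h'⟩ | ⟨h, h'⟩
          · have hh : u = e.2 := by rw [hu]; unfold other; rw [if_pos h]
            exact Or.inl ⟨h, hh, hh ▸ h', hh ▸ hend.2⟩
          · have hh : u = e.1 := by rw [hu]; unfold other; rw [if_neg h']
            exact Or.inr ⟨h, hh, hh ▸ h', hh ▸ hend.1⟩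
        have huval : (e.1 = v ∧ u = e.2) ∨ (e.2 = v ∧ u = e.1) :=
          key.imp (fun h => ⟨h.1, h.2.1⟩) (fun h => ⟨h.1, h.2.1⟩)
        have hune : u ≠ v := by rcases key with h | h <;> exact h.2.2.1
        have huA : u ∈ A := by rcases key with h | h <;> exact h.2.2.2
        refine ⟨e, ?_, S.erase e, ?_, Finset.insert_erase heS⟩
        · simp only [Ev, Finset.mem_filter]
          refine ⟨heE, ?_⟩
          rcases huval with ⟨hh, hh'⟩ | ⟨hh, hh'⟩
          · left; exact ⟨hh, hh' ▸ Finset.mem_erase.mpr ⟨hune, huA⟩⟩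
          · right; exact ⟨hh, hh' ▸ Finset.mem_erase.mpr ⟨hune, huA⟩⟩
        · rw [mem_mset]
          refine ⟨fun a ha => h1 (Finset.erase_subset e S ha), fun i =>
            le_trans (Finset.sum_le_sum_of_subset (Finset.erase_subset e S)) (h2 i), ?_⟩
          intro f hf
          have hfS : f ∈ S := Finset.erase_subset e S hf
          have hfe : f ≠ e := Finset.ne_of_mem_erase hf
          obtain ⟨hf1, hf2⟩ := h3 f hfS
          have hkey : ∀ i : Fin n, touch e i = 1 → touch f i = 0 := by
            intro i hti
            by_contra hc
            have h2i : 2 ≤ deg S i := by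
              have hsub : ({e, f} : Finset (Fin n × Fin n)) ⊆ S := by
                intro a ha; simp only [Finset.mem_insert, Finset.mem_singleton] at ha
                rcases ha with rfl | rfl <;> assumption
              calc 2 ≤ touch e i + touch f i := by omega
                _ = ∑ a ∈ ({e, f} : Finset (Fin n × Fin n)), touch a i := by
                    rw [Finset.sum_pair (fun hh => hfe hh.symm)]
                _ ≤ deg S i := Finset.sum_le_sum_of_subset hsub
            have := h2 i
            omega
          have htv : touch e v = 1 := by
            unfold touch; rcases hcases with ⟨h, h'⟩ | ⟨h, h'⟩ <;> simp [h, h']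
          have htu : touch e u = 1 := by
            unfold touch
            rcases huval with ⟨hh, hh'⟩ | ⟨hh, hh'⟩
            · rw [if_neg (by rw [hh]; exact fun hc => hune hc.symm), if_pos hh'.symm]
            · rw [if_pos hh'.symm, if_neg (by rw [hh]; exact fun hc => hune hc.symm)]
          have hfv := hkey v htv
          have hfu := hkey u htu
          unfold touch at hfv hfu
          have hf1v : f.1 ≠ v := fun hh => by rw [hh] at hfv; split_ifs at hfv <;> omega
          have hf2v : f.2 ≠ v := fun hh => by rw [hh] at hfv; split_ifs at hfv <;> omega
          have hf1u : f.1 ≠ u := fun hh => by rw [hh] at hfu; split_ifs at hfu <;> omega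
          have hf2u : f.2 ≠ u := fun hh => by rw [hh] at hfu; split_ifs at hfu <;> omega
          exact ⟨Finset.mem_erase.mpr ⟨hf1u, Finset.mem_erase.mpr ⟨hf1v, hf1⟩⟩,
            Finset.mem_erase.mpr ⟨hf2u, Finset.mem_erase.mpr ⟨hf2v, hf2⟩⟩⟩
      · rintro ⟨e, he, S', hS', rfl⟩
        obtain ⟨heE, huAe, htouch⟩ := Ev_other he
        have hu_ne : other v e ≠ v := (Finset.mem_erase.mp huAe).1
        have hu_A : other v e ∈ A := Finset.mem_of_mem_erase huAe
        obtain ⟨hS'E, hS'M, hS'A⟩ := mem_mset.mp hS'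
        have hS'v : deg S' v = 0 := mset_deg_zero hS' (by simp)
        have hS'u : deg S' (other v e) = 0 := mset_deg_zero hS' (by simp)
        have heS' : e ∉ S' := by
          intro hc
          have := touch_le_deg hc v
          rw [htouch v, hS'v] at this
          simp at this
        have hdeg : ∀ i, deg (insert e S') i = touch e i + deg S' i := deg_insert heS'
        constructor
        · rw [mem_mset]
          refine ⟨Finset.insert_subset heE hS'E, ?_, ?_⟩
          · intro i
            rw [hdeg i, htouch i]
            by_cases hiv : v = i
            · subst hiv; rw [hS'v]; split_ifs <;> omega
            · by_cases hiu : other v e = i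
              · subst hiu; rw [hS'u]; split_ifs <;> omega
              · have := hS'M i; split_ifs <;> omega
          · intro f hf
            rcases Finset.mem_insert.mp hf with rfl | hfS'
            · have h1 : touch f f.1 ≠ 0 := by unfold touch; simp
              have h2 : touch f f.2 ≠ 0 := by unfold touch; simp
              rw [htouch f.1] at h1; rw [htouch f.2] at h2
              constructor
              · rcases (by split_ifs at h1 <;> tauto :
                  v = f.1 ∨ other v f = f.1) with hh | hh
                · exact hh ▸ hv
                · exact hh ▸ hu_A
              · rcases (by split_ifs at h2 <;> tauto :
                  v = f.2 ∨ other v f = f.2) with hh | hh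
                · exact hh ▸ hv
                · exact hh ▸ hu_A
            · obtain ⟨ha, hb⟩ := hS'A f hfS'
              exact ⟨Finset.mem_of_mem_erase (Finset.mem_of_mem_erase ha),
                Finset.mem_of_mem_erase (Finset.mem_of_mem_erase hb)⟩
        · rw [hdeg v, htouch v]
          simp
    rw [hcov]
    rw [Finset.sum_biUnion ?hdisj]
    case hdisj =>
      intro e1 h1 e2 h2 hne
      have h1' : e1 ∈ Ev E A v := h1
      have h2' : e2 ∈ Ev E A v := h2
      refine Finset.disjoint_left.mpr fun S hSe1 hSe2 => ?_
      obtain ⟨S1, hS1, rfl⟩ := Finset.mem_image.mp hSe1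
      obtain ⟨S2, hS2, heq⟩ := Finset.mem_image.mp hSe2
      obtain ⟨-, -, ht2⟩ := Ev_other h2'
      have he2mem : e2 ∈ insert e1 S1 := heq ▸ Finset.mem_insert_self e2 S2
      rcases Finset.mem_insert.mp he2mem with hh | hh
      · exact hne hh.symm
      · have hle := touch_le_deg hh v
        rw [ht2 v, mset_deg_zero hS1
          (by simp : v ∉ (A.erase v).erase (other v e1))] at hle
        simp at hle
    refine Finset.sum_congr rfl fun e he => ?_
    obtain ⟨heE, huAe, htouch⟩ := Ev_other he
    have hinj : ∀ S1 ∈ mset E ((A.erase v).erase (other v e)),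
        ∀ S2 ∈ mset E ((A.erase v).erase (other v e)),
          insert e S1 = insert e S2 → S1 = S2 := by
      intro S1 h1 S2 h2 heq
      have he1 : e ∉ S1 := by
        intro hc
        have hle := touch_le_deg hc v
        rw [htouch v, mset_deg_zero h1
          (by simp : v ∉ (A.erase v).erase (other v e))] at hle
        simp at hle
      have he2 : e ∉ S2 := by
        intro hc
        have hle := touch_le_deg hc v
        rw [htouch v, mset_deg_zero h2
          (by simp : v ∉ (A.erase v).erase (other v e))] at hle
        simp at hle
      rw [← Finset.erase_insert he1, ← Finset.erase_insert he2, heq]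
    rw [Finset.sum_image hinj]
    unfold g
    rw [Finset.mul_sum]
    refine Finset.sum_congr rfl fun S' hS' => ?_
    have hS'v : deg S' v = 0 := mset_deg_zero hS' (by simp)
    have hS'u : deg S' (other v e) = 0 := mset_deg_zero hS' (by simp)
    have heS' : e ∉ S' := by
      intro hc
      have hle := touch_le_deg hc v
      rw [htouch v, hS'v] at hle; simp at hle
    rw [Finset.prod_insert heS']
    have hset : A \ verts (insert e S') = ((A.erase v).erase (other v e)) \ verts S' := by
      ext i
      simp only [Finset.mem_sdiff, verts, Finset.mem_filter, Finset.mem_univ, true_and,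
        Finset.mem_erase, deg_insert heS', htouch i]
      constructor
      · rintro ⟨hiA, hnd⟩
        refine ⟨⟨?_, ?_, hiA⟩, ?_⟩ <;> (try intro hh) <;> split_ifs at hnd <;> omega
      · rintro ⟨⟨hiu, hiv, hiA⟩, hnd⟩
        refine ⟨hiA, ?_⟩
        rw [if_neg (fun hh => hiv hh.symm), if_neg (fun hh => hiu hh.symm)]
        omega
    rw [hset]; ring
  have hsplit : g E lam x A
      = ∑ S ∈ (mset E A).filter (fun S => 0 < deg S v),
          ((∏ e ∈ S, (lam e : ℂ)) * ∏ i ∈ A \ verts S, x i)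
        + ∑ S ∈ (mset E A).filter (fun S => ¬ 0 < deg S v),
          ((∏ e ∈ S, (lam e : ℂ)) * ∏ i ∈ A \ verts S, x i) := by
    unfold g
    rw [Finset.sum_filter_add_sum_filter_not]
  rw [hsplit, huncovEq, hcovEq]
  ring

lemma g_empty (E : Finset (Fin n × Fin n)) (lam : Fin n × Fin n → ℝ) (x : Fin n → ℂ) :
    g E lam x ∅ = 1 := by
  have hm : mset E (∅ : Finset (Fin n)) = {∅} := by
    ext S
    simp only [mem_mset, Finset.mem_singleton]
    constructor
    · rintro ⟨-, -, h⟩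
      exact Finset.eq_empty_iff_forall_notMem.mpr fun e he => by simpa using (h e he).1
    · rintro rfl
      refine ⟨Finset.empty_subset _, fun i => by simp [deg], by simp⟩
  rw [g, hm]
  simp

lemma main (E : Finset (Fin n × Fin n)) (lam : Fin n × Fin n → ℝ) (hlam : ∀ e, 0 ≤ lam e)
    (x : Fin n → ℂ) (hx : ∀ i, 0 < (x i).re) (A : Finset (Fin n)) :
    g E lam x A ≠ 0 ∧ ∀ v ∈ A, 0 < (g E lam x A / g E lam x (A.erase v)).re := by
  induction A using Finset.strongInduction with
  | _ A ih =>
    have hratio : ∀ v ∈ A, 0 < (g E lam x A / g E lam x (A.erase v)).re := by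
      intro v hv
      have ih1 := ih (A.erase v) (Finset.erase_ssubset hv)
      have hg1 : g E lam x (A.erase v) ≠ 0 := ih1.1
      have hterm : ∀ e ∈ Ev E A v,
          0 ≤ ((lam e : ℂ) * g E lam x ((A.erase v).erase (other v e))
            / g E lam x (A.erase v)).re := by
        intro e he
        obtain ⟨-, huAe, -⟩ := Ev_other he
        have hratio2 := ih1.2 (other v e) huAe
        have hne2 : g E lam x (A.erase v) / g E lam x ((A.erase v).erase (other v e)) ≠ 0 := by
          intro hc; rw [hc] at hratio2; simp at hratio2
        have hg2 : g E lam x ((A.erase v).erase (other v e)) ≠ 0 :=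
          (ih ((A.erase v).erase (other v e))
            (lt_of_lt_of_le (Finset.erase_ssubset huAe) (Finset.erase_subset v A))).1
        have hinvpos : 0 < (g E lam x ((A.erase v).erase (other v e))
            / g E lam x (A.erase v)).re := by
          have heq : g E lam x ((A.erase v).erase (other v e)) / g E lam x (A.erase v)
              = (g E lam x (A.erase v) / g E lam x ((A.erase v).erase (other v e)))⁻¹ := by
            field_simp
          rw [heq, Complex.inv_re]
          exact div_pos hratio2 (Complex.normSq_pos.mpr hne2)
        have heq2 : (lam e : ℂ) * g E lam x ((A.erase v).erase (other v e))
            / g E lam x (A.erase v)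
            = (lam e : ℂ) * (g E lam x ((A.erase v).erase (other v e))
              / g E lam x (A.erase v)) := by ring
        rw [heq2, Complex.re_ofReal_mul]
        exact mul_nonneg (hlam e) hinvpos.le
      have hrec := rec_g E lam x A v hv
      have hdiv : g E lam x A / g E lam x (A.erase v)
          = x v + ∑ e ∈ Ev E A v, ((lam e : ℂ)
            * g E lam x ((A.erase v).erase (other v e)) / g E lam x (A.erase v)) := by
        rw [hrec, add_div, Finset.sum_div, mul_div_assoc, div_self hg1, mul_one]
      rw [hdiv, Complex.add_re, Complex.re_sum]
      have hsum : 0 ≤ ∑ e ∈ Ev E A v, ((lam e : ℂ)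
          * g E lam x ((A.erase v).erase (other v e)) / g E lam x (A.erase v)).re :=
        Finset.sum_nonneg hterm
      linarith [hx v]
    refine ⟨?_, hratio⟩
    rcases A.eq_empty_or_nonempty with rfl | ⟨v, hv⟩
    · rw [g_empty]; exact one_ne_zero
    · intro h0
      have := hratio v hv
      rw [h0, zero_div] at this
      simp at this


end HL

/-- **Heilmann–Lieb theorem (multivariate form).** For a graph on `{1,…,n}` with edge set
`E` (edges being pairs of distinct vertices) and non-negative edge weights `λ_e`, the
multivariate matching polynomial `MAP[∏_{e={i,j}∈E} (1 + λ_e z_i z_j)]` is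
`ℍ_{π/2}`-stable: it does not vanish when all `z i` have positive real part. -/
theorem heilmann_lieb (n : ℕ) (E : Finset (Fin n × Fin n)) (hE : ∀ e ∈ E, e.1 ≠ e.2)
    (lam : Fin n × Fin n → ℝ) (hlam : ∀ e, 0 ≤ lam e)
    (z : Fin n → ℂ) (hz : ∀ i, 0 < (z i).re) :
    eval z (MAP (∏ e ∈ E, (1 + C ((lam e : ℝ) : ℂ) * X e.1 * X e.2))) ≠ 0 := by
  have hz0 : ∀ i, z i ≠ 0 := fun i h => by
    have := hz i; rw [h] at this; simp at this
  rw [HL.part1 E lam z, HL.bridge E lam z hz0]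
  have hx : ∀ i, 0 < ((z i)⁻¹).re := fun i => by
    rw [Complex.inv_re]
    exact div_pos (hz i) (Complex.normSq_pos.mpr (hz0 i))
  exact mul_ne_zero (Finset.prod_ne_zero_iff.mpr fun i _ => hz0 i)
    (HL.main E lam hlam (fun i => (z i)⁻¹) hx Finset.univ).1
end
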